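/- arXiv:1409.6382 — 5 statements merged into one kernel-verified Lean document; each statement's English description precedes it below -/
import Mathlib

section
/- Every bijection φ : A^n → A^n that preserves the Hamming distance (d(φ(x),φ(y)) = d(x,y) for all x,y ∈ A^n) can be written as φ = f ∘ σ̄ for some configuration f ∈ Conf(A^n) and some equivalence σ̄ ∈ Equ(A^n). -/
set_option linter.unusedSectionVars false
set_option maxHeartbeats 1000000

section
variable {A : Type*} [Fintype A] [DecidableEq A] {n : ℕ}

def DiffAt (x y : Fin n → A) (k : Fin n) : Prop :=
  x k ≠ y k ∧ ∀ j, j ≠ k → x j = y j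

lemma DiffAt.symm {x y : Fin n → A} {k} (h : DiffAt x y k) : DiffAt y x k :=
  ⟨fun e => h.1 e.symm, fun j hj => (h.2 j hj).symm⟩

lemma DiffAt.unique {x y : Fin n → A} {k k'} (h : DiffAt x y k) (h' : DiffAt x y k') : k = k' := by
  by_contra hne
  exact h'.1 (h.2 k' (fun e => hne e.symm))

lemma hammingDist_eq_one_iff {x y : Fin n → A} :
    hammingDist x y = 1 ↔ ∃ k, DiffAt x y k := by
  unfold hammingDist
  rw [Finset.card_eq_one]
  constructor
  · rintro ⟨k, hk⟩
    have hmem : ∀ j, x j ≠ y j ↔ j ∈ ({k} : Finset (Fin n)) := by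
      intro j; rw [← hk]; simp
    refine ⟨k, ?_, ?_⟩
    · exact (hmem k).mpr (by simp)
    · intro j hj
      by_contra hne
      exact hj (by simpa using (hmem j).mp hne)
  · rintro ⟨k, hk⟩
    refine ⟨k, ?_⟩
    ext j
    simp only [Finset.mem_filter, Finset.mem_univ, true_and, Finset.mem_singleton]
    constructor
    · intro hne; by_contra hj; exact hne (hk.2 j hj)
    · rintro rfl; exact hk.1

lemma dist_le_one_of_agreeOff {x y : Fin n → A} {k : Fin n}
    (h : ∀ j, j ≠ k → x j = y j) : hammingDist x y ≤ 1 := by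
  unfold hammingDist
  have : ({i | x i ≠ y i} : Finset (Fin n)) ⊆ {k} := by
    intro j hj
    simp only [Finset.mem_filter, Finset.mem_univ, true_and] at hj
    simp only [Finset.mem_singleton]
    by_contra hjk; exact hj (h j hjk)
  simpa using Finset.card_le_card this

lemma two_le_dist {x y : Fin n → A} {i j : Fin n} (hij : i ≠ j)
    (hi : x i ≠ y i) (hj : x j ≠ y j) : 2 ≤ hammingDist x y := by
  unfold hammingDist
  have : ({i, j} : Finset (Fin n)) ⊆ Finset.filter (fun l => x l ≠ y l) Finset.univ := by
    intro l hl
    simp only [Finset.mem_insert, Finset.mem_singleton] at hl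
    simp only [Finset.mem_filter, Finset.mem_univ, true_and]
    rcases hl with rfl | rfl <;> assumption
  calc 2 = ({i, j} : Finset (Fin n)).card := by
        rw [Finset.card_insert_of_notMem (by simpa using hij)]; simp
  _ ≤ _ := Finset.card_le_card this

theorem main_nontrivial {A : Type*} [Fintype A] [DecidableEq A] [Nontrivial A] {n : ℕ}
    (φ : (Fin n → A) → (Fin n → A))
    (hiso : ∀ x y : Fin n → A, hammingDist (φ x) (φ y) = hammingDist x y) :
    ∃ (g : Fin n → Equiv.Perm A) (σ : Equiv.Perm (Fin n)),
      ∀ (x : Fin n → A) (i : Fin n), φ x i = g i (x (σ i)) := by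
  classical
  -- transport DiffAt through φ
  have hstep : ∀ x y : Fin n → A, ∀ i, DiffAt x y i → ∃ k, DiffAt (φ x) (φ y) k := by
    intro x y i h
    rw [← hammingDist_eq_one_iff, hiso, hammingDist_eq_one_iff]
    exact ⟨i, h⟩
  have hDup : ∀ (x : Fin n → A) (i : Fin n) (a : A), a ≠ x i →
      DiffAt x (Function.update x i a) i := by
    intro x i a ha
    refine ⟨by simp [Function.update_self]; exact fun e => ha e.symm, ?_⟩
    intro j hj; simp [Function.update_of_ne hj]
  -- every line maps into a line: common direction
  have L5 : ∀ (x : Fin n → A) (i : Fin n), ∃ k, ∀ a : A, a ≠ x i →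
      DiffAt (φ x) (φ (Function.update x i a)) k := by
    intro x i
    obtain ⟨a0, ha0⟩ := exists_ne (x i)
    obtain ⟨k, hk⟩ := hstep x _ i (hDup x i a0 ha0)
    refine ⟨k, ?_⟩
    intro a ha
    rcases eq_or_ne a a0 with rfl | hne
    · exact hk
    obtain ⟨k', hk'⟩ := hstep x _ i (hDup x i a ha)
    -- u0 = update x i a0, u = update x i a differ exactly at i
    have huv : DiffAt (Function.update x i a0) (Function.update x i a) i := by
      refine ⟨by simp [Function.update_self]; exact fun e => hne e.symm, ?_⟩
      intro j hj; simp [Function.update_of_ne hj]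
    obtain ⟨m, hm⟩ := hstep _ _ i huv
    have hkk' : k' = k := by
      by_contra hne2
      have h1 : φ (Function.update x i a0) k ≠ φ (Function.update x i a) k := by
        have hh : φ x k = φ (Function.update x i a) k := hk'.2 k (fun e => hne2 e.symm)
        rw [← hh]
        exact fun e => hk.1 e.symm
      have h2 : φ (Function.update x i a0) k' ≠ φ (Function.update x i a) k' := by
        have hh : φ x k' = φ (Function.update x i a0) k' := hk.2 k' hne2
        rw [← hh]
        exact hk'.1
      have e1 : k = m := by
        by_contra h; exact h1 (hm.2 k h)
      have e2 : k' = m := by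
        by_contra h; exact h2 (hm.2 k' h)
      exact hne2 (e2.trans e1.symm)
    rw [← hkk']; exact hk'
  choose dir hdir using L5
  -- adjacent points give the same direction in other coordinates
  have L6 : ∀ (x y : Fin n → A) (j i : Fin n), DiffAt x y j → i ≠ j →
      dir x i = dir y i := by
    intro x y j i hxy hij
    obtain ⟨a, ha⟩ := exists_ne (x i)
    have hyi : y i = x i := (hxy.2 i hij).symm
    set u := Function.update x i a with hu
    set v := Function.update y i a with hv
    have hku : DiffAt (φ x) (φ u) (dir x i) := hdir x i a ha
    have hkv : DiffAt (φ y) (φ v) (dir y i) := hdir y i a (by rw [hyi]; exact ha)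
    obtain ⟨m, hm⟩ := hstep x y j hxy
    have huvd : DiffAt u v j := by
      constructor
      · rw [hu, hv]
        simp only [Function.update_of_ne (fun e => hij e.symm)]  -- wrong direction?
        exact hxy.1
      · intro l hl
        rcases eq_or_ne l i with rfl | hli
        · simp [hu, hv, Function.update_self]
        · simp [hu, hv, Function.update_of_ne hli]
          exact hxy.2 l hl
    obtain ⟨p, hp⟩ := hstep u v j huvd
    -- x and v differ at both i and j
    have hxv2 : 2 ≤ hammingDist (φ x) (φ v) := by
      rw [hiso]
      refine two_le_dist hij ?_ ?_
      · rw [hv, Function.update_self]; exact ha.symm  -- x i ≠ a? ha : a ≠ x i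
      · rw [hv, Function.update_of_ne (fun e => hij e.symm)]; exact hxy.1
    have hyu2 : 2 ≤ hammingDist (φ y) (φ u) := by
      rw [hiso]
      refine two_le_dist hij ?_ ?_
      · rw [hu, Function.update_self, hyi]; exact fun e => ha e.symm
      · rw [hu, Function.update_of_ne (fun e => hij e.symm)]; exact fun e => hxy.1 e.symm
    -- m ≠ dir x i
    have hmk : m ≠ dir x i := by
      intro e
      have : ∀ l, l ≠ m → φ y l = φ u l := by
        intro l hl
        rw [← hm.2 l hl]
        exact hku.2 l (by rw [← e]; exact hl)
      have := dist_le_one_of_agreeOff this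
      omega
    have hmk' : m ≠ dir y i := by
      intro e
      have : ∀ l, l ≠ m → φ x l = φ v l := by
        intro l hl
        rw [hm.2 l hl]
        exact hkv.2 l (by rw [← e]; exact hl)
      have := dist_le_one_of_agreeOff this
      omega
    by_contra hkk
    -- φ u and φ v differ at m and at dir x i, contradicting DiffAt at single p
    have d1 : φ u m ≠ φ v m := by
      rw [← hku.2 m hmk, ← hkv.2 m hmk']
      exact hm.1
    have d2 : φ u (dir x i) ≠ φ v (dir x i) := by
      have e1 : φ v (dir x i) = φ y (dir x i) := (hkv.2 _ hkk).symm
      have e2 : φ y (dir x i) = φ x (dir x i) := (hm.2 _ (fun e => hmk e.symm)).symm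
      rw [e1, e2]
      exact fun e => hku.1 e.symm
    have em : m = p := by by_contra h; exact d1 (hp.2 m h)
    have ek : dir x i = p := by by_contra h; exact d2 (hp.2 _ h)
    exact hmk (em.trans ek.symm)
  -- direction is globally constant
  have L7 : ∀ x y : Fin n → A, ∀ i, dir x i = dir y i := by
    have key : ∀ (d : ℕ) (x y : Fin n → A), hammingDist x y = d → ∀ i, dir x i = dir y i := by
      intro d
      induction d with
      | zero => intro x y h i; rw [eq_of_hammingDist_eq_zero h]
      | succ d ih =>
        intro x y h i
        have hne : ∃ j, x j ≠ y j := by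
          by_contra hc
          push_neg at hc
          have : x = y := funext hc
          rw [this, hammingDist_self] at h
          omega
        obtain ⟨j, hj⟩ := hne
        set x' := Function.update x j (y j) with hx'
        have hdd : DiffAt x x' j := hDup x j (y j) (fun e => hj e.symm)
        have hd' : hammingDist x' y = d := by
          have hset : (Finset.filter (fun l => x' l ≠ y l) Finset.univ)
              = (Finset.filter (fun l => x l ≠ y l) Finset.univ).erase j := by
            ext l
            simp only [Finset.mem_filter, Finset.mem_univ, true_and, Finset.mem_erase]
            rcases eq_or_ne l j with rfl | hlj
            · simp [hx', Function.update_self]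
            · simp [hx', Function.update_of_ne hlj, hlj]
          have hjmem : j ∈ Finset.filter (fun l => x l ≠ y l) Finset.univ := by
            simp [hj]
          have : hammingDist x' y = hammingDist x y - 1 := by
            unfold hammingDist
            rw [hset, Finset.card_erase_of_mem hjmem]
          omega
        have step : dir x i = dir x' i := by
          rcases eq_or_ne i j with rfl | hij
          · -- same line case
            have h1 : DiffAt (φ x) (φ x') (dir x i) := by
              have := hdir x i (y i) (fun e => hj e.symm)
              exact this
            have hxx' : x' i ≠ x i := by
              rw [hx', Function.update_self]; exact fun e => hj e.symm
            have h2 : DiffAt (φ x') (φ (Function.update x' i (x i))) (dir x' i) :=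
              hdir x' i (x i) (fun e => hxx' e.symm)
            have hupd : Function.update x' i (x i) = x := by
              rw [hx']
              ext l
              rcases eq_or_ne l i with rfl | hl
              · simp [Function.update_self]
              · simp [Function.update_of_ne hl]
            rw [hupd] at h2
            exact (h1.symm.unique h2).symm ▸ rfl
          · exact L6 x x' j i hdd hij
        rw [step, ih x' y hd' i]
    intro x y i
    exact key (hammingDist x y) x y rfl i
  -- the base point and the permutation
  set x0 : Fin n → A := fun _ => Classical.arbitrary A with hx0
  set σ0 : Fin n → Fin n := fun i => dir x0 i with hσ0
  have hinj : Function.Injective σ0 := by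
    intro i j hij
    by_contra hne
    obtain ⟨a, ha⟩ := exists_ne (x0 i)
    obtain ⟨b, hb⟩ := exists_ne (x0 j)
    have hu : DiffAt (φ x0) (φ (Function.update x0 i a)) (σ0 i) := hdir x0 i a ha
    have hv : DiffAt (φ x0) (φ (Function.update x0 j b)) (σ0 j) := hdir x0 j b hb
    have hagree : ∀ l, l ≠ σ0 i → φ (Function.update x0 i a) l = φ (Function.update x0 j b) l := by
      intro l hl
      rw [← hu.2 l hl, hv.2 l (by rw [← hij]; exact hl)]
    have hle := dist_le_one_of_agreeOff hagree
    rw [hiso] at hle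
    have h2 : 2 ≤ hammingDist (Function.update x0 i a) (Function.update x0 j b) := by
      refine two_le_dist hne ?_ ?_
      · rw [Function.update_self, Function.update_of_ne hne]
        exact ha
      · rw [Function.update_of_ne (fun e => hne e.symm), Function.update_self]
        exact fun e => hb e.symm
    omega
  set τ : Equiv.Perm (Fin n) := Equiv.ofBijective σ0 (Finite.injective_iff_bijective.mp hinj)
    with hτ
  have hτa : ∀ l, τ l = σ0 l := fun l => rfl
  -- updating coordinate i only changes output coordinate σ0 i
  have L8 : ∀ (x : Fin n → A) (i : Fin n) (a : A) (j : Fin n), j ≠ σ0 i →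
      φ (Function.update x i a) j = φ x j := by
    intro x i a j hj
    rcases eq_or_ne a (x i) with rfl | ha
    · rw [Function.update_eq_self]
    · have := hdir x i a ha
      have hdx : dir x i = σ0 i := L7 x x0 i
      rw [hdx] at this
      exact (this.2 j hj).symm
  -- output coordinate j depends only on input coordinate τ.symm j
  have L9 : ∀ (x y : Fin n → A) (j : Fin n), x (τ.symm j) = y (τ.symm j) → φ x j = φ y j := by
    have key : ∀ (d : ℕ) (x y : Fin n → A), hammingDist x y = d →
        ∀ j, x (τ.symm j) = y (τ.symm j) → φ x j = φ y j := by
      intro d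
      induction d with
      | zero => intro x y h j _; rw [eq_of_hammingDist_eq_zero h]
      | succ d ih =>
        intro x y h j hagree
        have hne : ∃ l, x l ≠ y l := by
          by_contra hc
          push_neg at hc
          rw [funext hc, hammingDist_self] at h
          omega
        obtain ⟨l, hl⟩ := hne
        have hlj : l ≠ τ.symm j := by
          intro e; rw [e] at hl; exact hl hagree
        set x' := Function.update x l (y l) with hx'
        have hd' : hammingDist x' y = d := by
          have hset : (Finset.filter (fun m => x' m ≠ y m) Finset.univ)
              = (Finset.filter (fun m => x m ≠ y m) Finset.univ).erase l := by
            ext m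
            simp only [Finset.mem_filter, Finset.mem_univ, true_and, Finset.mem_erase]
            rcases eq_or_ne m l with rfl | hml
            · simp [hx', Function.update_self]
            · simp [hx', Function.update_of_ne hml, hml]
          have hlmem : l ∈ Finset.filter (fun m => x m ≠ y m) Finset.univ := by
            simp [hl]
          have : hammingDist x' y = hammingDist x y - 1 := by
            unfold hammingDist
            rw [hset, Finset.card_erase_of_mem hlmem]
          omega
        have e1 : φ x j = φ x' j := by
          rw [hx']
          refine (L8 x l (y l) j ?_).symm
          intro e
          apply hlj
          have : τ l = j := by rw [hτa]; exact e.symm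
          rw [← this, Equiv.symm_apply_apply]
        rw [e1]
        refine ih x' y hd' j ?_
        show Function.update x l (y l) (τ.symm j) = y (τ.symm j)
        rw [Function.update_of_ne (fun e => hlj e.symm)]
        exact hagree
    intro x y j hagree
    exact key (hammingDist x y) x y rfl j hagree
  -- define the coordinate permutations
  set g0 : Fin n → A → A := fun j a => φ (Function.update x0 (τ.symm j) a) j with hg0
  have hG : ∀ (x : Fin n → A) (j : Fin n), φ x j = g0 j (x (τ.symm j)) := by
    intro x j
    refine L9 x _ j ?_
    rw [Function.update_self]
  have hφinj : Function.Injective φ := by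
    intro x y hxy
    have := hiso x y
    rw [hxy, hammingDist_self] at this
    exact eq_of_hammingDist_eq_zero this.symm
  have hg0inj : ∀ j, Function.Injective (g0 j) := by
    intro j a b hab
    by_contra hne
    set u := Function.update x0 (τ.symm j) a with hu
    set v := Function.update x0 (τ.symm j) b with hv
    have huv : u ≠ v := by
      intro e
      apply hne
      have := congrFun e (τ.symm j)
      rwa [hu, hv, Function.update_self, Function.update_self] at this
    have hoff : ∀ j', j' ≠ j → φ u j' = φ v j' := by
      intro j' hj'
      refine L9 u v j' ?_
      have : τ.symm j' ≠ τ.symm j := fun e => hj' (τ.symm.injective e)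
      rw [hu, hv, Function.update_of_ne this, Function.update_of_ne this]
    have hatj : φ u j = φ v j := hab
    have : φ u = φ v := by
      ext j'
      rcases eq_or_ne j' j with rfl | hj'
      · exact hatj
      · exact hoff j' hj'
    exact huv (hφinj this)
  have hg0bij : ∀ j, Function.Bijective (g0 j) :=
    fun j => Finite.injective_iff_bijective.mp (hg0inj j)
  refine ⟨fun j => Equiv.ofBijective (g0 j) (hg0bij j), τ.symm, ?_⟩
  intro x i
  exact hG x i

end

/-- Every Hamming-distance-preserving bijection of `A^n` is the composition
`f ∘ σ̄` of an equivalence `σ̄` (a permutation of the coordinates) followed by a configuration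
`f` (coordinatewise permutations of the alphabet): explicitly, `φ x i = g i (x (σ i))`. -/
theorem isometry_eq_configuration_comp_equivalence
    {A : Type*} [Fintype A] [DecidableEq A] [Nonempty A] {n : ℕ}
    (φ : (Fin n → A) → (Fin n → A)) (hbij : Function.Bijective φ)
    (hiso : ∀ x y : Fin n → A, hammingDist (φ x) (φ y) = hammingDist x y) :
    ∃ (g : Fin n → Equiv.Perm A) (σ : Equiv.Perm (Fin n)),
      ∀ (x : Fin n → A) (i : Fin n), φ x i = g i (x (σ i)) := by
  rcases subsingleton_or_nontrivial A with hs | hn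
  · refine ⟨fun _ => Equiv.refl A, Equiv.refl _, ?_⟩
    intro x i
    exact Subsingleton.elim _ _
  · exact main_nontrivial φ hiso
end

section
/- Let A be an alphabet with |A| = q ≥ 2 and let C ⊆ A^n be an MDS code with |C| ≥ 2 that is not trivial. Then C is indecomposable. -/
section Codes
variable {A : Type*} [Fintype A] [DecidableEq A]

/-- `φ` is a morphism of codes from `C ⊆ A^n` to `D ⊆ A^m`. -/
def IsCodeHom {n m : ℕ} (C : Set (Fin n → A)) (D : Set (Fin m → A))
    (φ : (Fin n → A) → (Fin m → A)) : Prop :=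
  (∀ x ∈ C, φ x ∈ D) ∧ ∀ x y : Fin n → A, hammingDist (φ x) (φ y) ≤ hammingDist x y

/-- The codes `C` and `D` are isomorphic. -/
def CodeIso {n m : ℕ} (C : Set (Fin n → A)) (D : Set (Fin m → A)) : Prop :=
  ∃ (φ : (Fin n → A) → (Fin m → A)) (ψ : (Fin m → A) → (Fin n → A)),
    IsCodeHom C D φ ∧ IsCodeHom D C ψ ∧
      Function.LeftInverse ψ φ ∧ Function.RightInverse ψ φ

/-- Direct sum of two codes. -/
def codeSum {n m : ℕ} (C : Set (Fin n → A)) (D : Set (Fin m → A)) :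
    Set (Fin (n + m) → A) :=
  Set.image2 Fin.append C D

/-- A code is decomposable if it is isomorphic to a direct sum of two codes of positive length. -/
def CodeDecomposable {n : ℕ} (C : Set (Fin n → A)) : Prop :=
  ∃ (p q : ℕ) (D : Set (Fin p → A)) (E : Set (Fin q → A)),
    0 < p ∧ 0 < q ∧ D.Nonempty ∧ E.Nonempty ∧ CodeIso C (codeSum D E)

/-- Minimum distance of a code. -/
noncomputable def minDist {n : ℕ} (C : Set (Fin n → A)) : ℕ :=
  sInf {d | ∃ x ∈ C, ∃ y ∈ C, x ≠ y ∧ hammingDist x y = d}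

/-- `r` is a correcting radius for `C`: closed balls of radius `r` centered at distinct
codewords are pairwise disjoint. -/
def IsCorrectingRadius {n : ℕ} (C : Set (Fin n → A)) (r : ℕ) : Prop :=
  ∀ c₁ ∈ C, ∀ c₂ ∈ C, c₁ ≠ c₂ →
    ∀ x : Fin n → A, hammingDist x c₁ ≤ r → ¬ hammingDist x c₂ ≤ r

/-- `C` is perfect: every word is within some correcting radius of a codeword. -/
def IsPerfectCode {n : ℕ} (C : Set (Fin n → A)) : Prop :=
  ∀ x : Fin n → A, ∃ r : ℕ, IsCorrectingRadius C r ∧ ∃ c ∈ C, hammingDist x c ≤ r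

/-- `C` is trivial: isomorphic to a full code `A^m`. -/
def IsTrivialCode {n : ℕ} (C : Set (Fin n → A)) : Prop :=
  ∃ m : ℕ, CodeIso C (Set.univ : Set (Fin m → A))

/-- `C` is degenerate: isomorphic to `{x} ⊕ D` for some letter `x` and some code `D`. -/
def CodeDegenerate {n : ℕ} (C : Set (Fin n → A)) : Prop :=
  ∃ (m : ℕ) (x : A) (D : Set (Fin m → A)),
    D.Nonempty ∧ CodeIso C (codeSum ({fun _ => x} : Set (Fin 1 → A)) D)

end Codes

section AuxMDS
set_option linter.unusedSectionVars false
variable {A : Type*} [Fintype A] [DecidableEq A]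

lemma aux_minDist_le {n : ℕ} {C : Set (Fin n → A)} {x y : Fin n → A}
    (hx : x ∈ C) (hy : y ∈ C) (hxy : x ≠ y) : minDist C ≤ hammingDist x y :=
  Nat.sInf_le ⟨x, hx, y, hy, hxy, rfl⟩

lemma aux_minDist_mem {n : ℕ} {C : Set (Fin n → A)} (h : 2 ≤ C.ncard) :
    ∃ x ∈ C, ∃ y ∈ C, x ≠ y ∧ hammingDist x y = minDist C := by
  obtain ⟨x, hx, y, hy, hxy⟩ := (Set.one_lt_ncard C.toFinite).1 (by omega)
  have hne : Set.Nonempty {d | ∃ x ∈ C, ∃ y ∈ C, x ≠ y ∧ hammingDist x y = d} :=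
    ⟨hammingDist x y, x, hx, y, hy, hxy, rfl⟩
  exact Nat.sInf_mem hne

lemma aux_minDist_pos {n : ℕ} {C : Set (Fin n → A)} (h : 2 ≤ C.ncard) :
    1 ≤ minDist C := by
  obtain ⟨x, hx, y, hy, hxy, hd⟩ := aux_minDist_mem h
  rw [← hd]; exact hammingDist_pos.2 hxy

lemma aux_minDist_le_len {n : ℕ} {C : Set (Fin n → A)} (h : 2 ≤ C.ncard) :
    minDist C ≤ n := by
  obtain ⟨x, hx, y, hy, hxy, hd⟩ := aux_minDist_mem h
  rw [← hd]
  simpa using (hammingDist_le_card_fintype (x := x) (y := y))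

lemma aux_hammingDist_append {p q : ℕ} (x x' : Fin p → A) (y y' : Fin q → A) :
    hammingDist (Fin.append x y) (Fin.append x' y') = hammingDist x x' + hammingDist y y' := by
  simp only [hammingDist, Finset.card_filter]
  rw [Fin.sum_univ_add]
  simp [Fin.append_left, Fin.append_right]

lemma aux_append_inj {p q : ℕ} {x x' : Fin p → A} {y y' : Fin q → A}
    (h : Fin.append x y = Fin.append x' y') : x = x' ∧ y = y' := by
  constructor
  · funext i
    have := congrFun h (Fin.castAdd q i)
    rwa [Fin.append_left, Fin.append_left] at this
  · funext i
    have := congrFun h (Fin.natAdd p i)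
    rwa [Fin.append_right, Fin.append_right] at this

lemma aux_singleton_bound {n : ℕ} {C : Set (Fin n → A)} (h : 2 ≤ C.ncard) :
    C.ncard ≤ Fintype.card A ^ (n - minDist C + 1) := by
  have hd1 : 1 ≤ minDist C := aux_minDist_pos h
  have hdn : minDist C ≤ n := aux_minDist_le_len h
  have hk : n - minDist C + 1 ≤ n := by omega
  set k := n - minDist C + 1 with hkdef
  set π : (Fin n → A) → (Fin k → A) := fun x i => x (Fin.castLE hk i) with hπ
  have hfilt : (Finset.univ.filter (fun i : Fin n => (i : ℕ) < k)).card = k := by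
    rw [show (Finset.univ.filter (fun i : Fin n => (i : ℕ) < k))
        = (Finset.univ : Finset (Fin k)).map (Fin.castLEEmb hk) from ?_]
    · simp
    · ext i
      simp only [Finset.mem_filter, Finset.mem_univ, true_and, Finset.mem_map,
        Fin.castLEEmb_apply]
      constructor
      · intro hi; exact ⟨⟨i, hi⟩, rfl⟩
      · rintro ⟨j, rfl⟩; exact j.isLt
  have hinj : Set.InjOn π C := by
    intro x hx y hy hxy
    by_contra hne
    have hle : minDist C ≤ hammingDist x y := aux_minDist_le hx hy hne
    have hsub : ({i | x i ≠ y i} : Finset (Fin n)) ⊆ Finset.univ.filter (fun i => k ≤ (i : ℕ)) := by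
      intro i hi
      simp only [Finset.mem_filter, Finset.mem_univ, true_and] at hi ⊢
      by_contra hik
      exact hi (congrFun hxy (⟨(i : ℕ), by omega⟩ : Fin k))
    have hcard : hammingDist x y ≤ (Finset.univ.filter (fun i : Fin n => k ≤ (i : ℕ))).card :=
      Finset.card_le_card hsub
    have hsplit : (Finset.univ.filter (fun i : Fin n => k ≤ (i : ℕ))).card
        + (Finset.univ.filter (fun i : Fin n => ¬ k ≤ (i : ℕ))).card = n := by
      rw [Finset.card_filter_add_card_filter_not]
      simp
    simp only [not_le] at hsplit
    rw [hfilt] at hsplit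
    omega
  calc C.ncard = (π '' C).ncard := (Set.ncard_image_of_injOn hinj).symm
    _ ≤ (Set.univ : Set (Fin k → A)).ncard :=
        Set.ncard_le_ncard (Set.subset_univ _) Set.finite_univ
    _ = Fintype.card A ^ k := by
        rw [Set.ncard_univ, Nat.card_eq_fintype_card, Fintype.card_fun, Fintype.card_fin]

lemma aux_ncard_codeSum {p q : ℕ} (D : Set (Fin p → A)) (E : Set (Fin q → A)) :
    (codeSum D E).ncard = D.ncard * E.ncard := by
  have himg : codeSum D E = (fun z : (Fin p → A) × (Fin q → A) => Fin.append z.1 z.2) '' (D ×ˢ E) :=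
    (Set.image_prod _).symm
  have hinj : Function.Injective (fun z : (Fin p → A) × (Fin q → A) => Fin.append z.1 z.2) := by
    rintro ⟨x, y⟩ ⟨x', y'⟩ h
    obtain ⟨h1, h2⟩ := aux_append_inj h
    exact Prod.ext h1 h2
  rw [himg, Set.ncard_image_of_injective _ hinj, ← Nat.card_coe_set_eq,
    Nat.card_congr (Equiv.Set.prod D E), Nat.card_prod, Nat.card_coe_set_eq, Nat.card_coe_set_eq]

lemma aux_minDist_codeSum_le_left {p q : ℕ} {D : Set (Fin p → A)} {E : Set (Fin q → A)}
    (hD : 2 ≤ D.ncard) (hE : E.Nonempty) : minDist (codeSum D E) ≤ minDist D := by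
  obtain ⟨x, hx, x', hx', hxx, hd⟩ := aux_minDist_mem hD
  obtain ⟨y, hy⟩ := hE
  have hne : Fin.append x y ≠ Fin.append x' y := fun h => hxx (aux_append_inj h).1
  have := aux_minDist_le (Set.mem_image2_of_mem hx hy) (Set.mem_image2_of_mem hx' hy) hne
  rwa [aux_hammingDist_append, hammingDist_self, add_zero, hd] at this

lemma aux_minDist_codeSum_le_right {p q : ℕ} {D : Set (Fin p → A)} {E : Set (Fin q → A)}
    (hD : D.Nonempty) (hE : 2 ≤ E.ncard) : minDist (codeSum D E) ≤ minDist E := by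
  obtain ⟨y, hy, y', hy', hyy, hd⟩ := aux_minDist_mem hE
  obtain ⟨x, hx⟩ := hD
  have hne : Fin.append x y ≠ Fin.append x y' := fun h => hyy (aux_append_inj h).2
  have := aux_minDist_le (Set.mem_image2_of_mem hx hy) (Set.mem_image2_of_mem hx hy') hne
  rwa [aux_hammingDist_append, hammingDist_self, zero_add, hd] at this

lemma aux_minDist_codeSum_singleton_left {p q : ℕ} (x0 : Fin p → A) {E : Set (Fin q → A)}
    (hE : 2 ≤ E.ncard) : minDist (codeSum {x0} E) = minDist E := by
  have hF2 : 2 ≤ (codeSum ({x0} : Set (Fin p → A)) E).ncard := by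
    rw [aux_ncard_codeSum, Set.ncard_singleton, one_mul]; exact hE
  apply le_antisymm (aux_minDist_codeSum_le_right (Set.singleton_nonempty x0) hE)
  obtain ⟨a, ha, b, hb, hab, hd⟩ := aux_minDist_mem hF2
  obtain ⟨x, hx, y, hy, rfl⟩ := ha
  obtain ⟨x', hx', y', hy', rfl⟩ := hb
  rw [Set.mem_singleton_iff] at hx hx'
  subst hx; subst hx'
  have hyy : y ≠ y' := fun h => hab (by rw [h])
  rw [← hd, aux_hammingDist_append, hammingDist_self, zero_add]
  exact aux_minDist_le hy hy' hyy

lemma aux_minDist_codeSum_singleton_right {p q : ℕ} {D : Set (Fin p → A)} (y0 : Fin q → A)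
    (hD : 2 ≤ D.ncard) : minDist (codeSum D {y0}) = minDist D := by
  have hF2 : 2 ≤ (codeSum D ({y0} : Set (Fin q → A))).ncard := by
    rw [aux_ncard_codeSum, Set.ncard_singleton, mul_one]; exact hD
  apply le_antisymm (aux_minDist_codeSum_le_left hD (Set.singleton_nonempty y0))
  obtain ⟨a, ha, b, hb, hab, hd⟩ := aux_minDist_mem hF2
  obtain ⟨x, hx, y, hy, rfl⟩ := ha
  obtain ⟨x', hx', y', hy', rfl⟩ := hb
  rw [Set.mem_singleton_iff] at hy hy'
  subst hy; subst hy'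
  have hxx : x ≠ x' := fun h => hab (by rw [h])
  rw [← hd, aux_hammingDist_append, hammingDist_self, add_zero]
  exact aux_minDist_le hx hx' hxx

lemma aux_iso_facts {n m : ℕ} {C : Set (Fin n → A)} {F : Set (Fin m → A)}
    (h : CodeIso C F) :
    C.ncard = F.ncard ∧ minDist C = minDist F ∧ (2 ≤ Fintype.card A → n = m) := by
  obtain ⟨φ, ψ, ⟨hφC, hφd⟩, ⟨hψF, hψd⟩, hl, hr⟩ := h
  have hisod : ∀ x y, hammingDist (φ x) (φ y) = hammingDist x y := fun x y =>
    le_antisymm (hφd x y) (by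
      have := hψd (φ x) (φ y)
      rwa [hl x, hl y] at this)
  have hinj : Function.Injective φ := hl.injective
  have himg : φ '' C = F := by
    apply Set.Subset.antisymm
    · rintro _ ⟨x, hx, rfl⟩; exact hφC x hx
    · intro z hz
      exact ⟨ψ z, hψF z hz, hr z⟩
  refine ⟨by rw [← himg, Set.ncard_image_of_injective _ hinj], ?_, ?_⟩
  · unfold minDist
    congr 1
    ext d
    simp only [Set.mem_setOf_eq]
    constructor
    · rintro ⟨x, hx, y, hy, hxy, rfl⟩
      exact ⟨φ x, himg ▸ ⟨x, hx, rfl⟩, φ y, himg ▸ ⟨y, hy, rfl⟩,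
        fun hc => hxy (hinj hc), hisod x y⟩
    · rintro ⟨a, ha, b, hb, hab, rfl⟩
      rw [← himg] at ha hb
      obtain ⟨x, hx, rfl⟩ := ha; obtain ⟨y, hy, rfl⟩ := hb
      exact ⟨x, hx, y, hy, fun hc => hab (by rw [hc]), (hisod x y).symm⟩
  · intro hq
    have hc : Fintype.card (Fin n → A) = Fintype.card (Fin m → A) :=
      Fintype.card_congr (Equiv.ofBijective φ ⟨hinj, fun z => ⟨ψ z, hr z⟩⟩)
    rw [Fintype.card_fun, Fintype.card_fun, Fintype.card_fin, Fintype.card_fin] at hc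
    exact Nat.pow_right_injective hq hc

end AuxMDS


/-- Every nontrivial MDS code (over an alphabet with at least two letters,
with at least two codewords) is indecomposable. -/
theorem mds_nontrivial_indecomposable {A : Type*} [Fintype A] [DecidableEq A]
    (hq : 2 ≤ Fintype.card A) {n : ℕ} (C : Set (Fin n → A)) (hcard : 2 ≤ C.ncard)
    (hMDS : C.ncard = Fintype.card A ^ (n - minDist C + 1))
    (hnt : ¬ IsTrivialCode C) : ¬ CodeDecomposable C := by
  rintro ⟨p, m, D, E, hp, hm, hDne, hEne, hiso⟩
  obtain ⟨hnc, hmd, hlen'⟩ := aux_iso_facts hiso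
  have hlen : n = p + m := hlen' hq
  have hFcard : (codeSum D E).ncard = D.ncard * E.ncard := aux_ncard_codeSum D E
  have hF2 : 2 ≤ (codeSum D E).ncard := hnc ▸ hcard
  have hD1 : 1 ≤ D.ncard := (Set.ncard_pos D.toFinite).2 hDne
  have hE1 : 1 ≤ E.ncard := (Set.ncard_pos E.toFinite).2 hEne
  by_cases hD2 : 2 ≤ D.ncard
  · by_cases hE2 : 2 ≤ E.ncard
    · -- both factors have at least two codewords
      have bD := aux_singleton_bound hD2
      have bE := aux_singleton_bound hE2
      have hdD1 := aux_minDist_pos hD2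
      have hdDp := aux_minDist_le_len hD2
      have hdE1 := aux_minDist_pos hE2
      have hdEm := aux_minDist_le_len hE2
      have hfD : minDist (codeSum D E) ≤ minDist D := aux_minDist_codeSum_le_left hD2 hEne
      have hfE : minDist (codeSum D E) ≤ minDist E := aux_minDist_codeSum_le_right hDne hE2
      have hprod : C.ncard ≤ Fintype.card A ^ ((p - minDist D + 1) + (m - minDist E + 1)) := by
        rw [hnc, hFcard, pow_add]
        exact Nat.mul_le_mul bD bE
      have hexp : n - minDist C + 1 ≤ (p - minDist D + 1) + (m - minDist E + 1) :=
        (Nat.pow_le_pow_iff_right (by omega : 1 < Fintype.card A)).1 (hMDS ▸ hprod)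
      have hmd1 : minDist C = 1 := by omega
      have hCn : C.ncard = Fintype.card A ^ n := by
        rw [hMDS, hmd1]
        congr 1
        omega
      have hCuniv : C = Set.univ := by
        apply Set.eq_of_subset_of_ncard_le (Set.subset_univ _) _ Set.finite_univ
        rw [Set.ncard_univ, Nat.card_eq_fintype_card, Fintype.card_fun, Fintype.card_fin, ← hCn]
      refine hnt ⟨n, id, id, ⟨fun x _ => Set.mem_univ x, fun x y => le_rfl⟩,
        ⟨fun x _ => ?_, fun x y => le_rfl⟩, fun x => rfl, fun x => rfl⟩
      rw [hCuniv]
      exact Set.mem_univ x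
    · -- E is a singleton
      obtain ⟨y0, rfl⟩ := Set.ncard_eq_one.1 (show E.ncard = 1 by omega)
      have hmdE : minDist (codeSum D {y0}) = minDist D :=
        aux_minDist_codeSum_singleton_right y0 hD2
      have bD := aux_singleton_bound hD2
      have hdD1 := aux_minDist_pos hD2
      have hdDp := aux_minDist_le_len hD2
      have hle : C.ncard ≤ Fintype.card A ^ (p - minDist D + 1) := by
        rw [hnc, hFcard, Set.ncard_singleton, mul_one]
        exact bD
      rw [hMDS, hmd, hmdE] at hle
      have hlt : Fintype.card A ^ (p - minDist D + 1)
          < Fintype.card A ^ (n - minDist D + 1) :=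
        Nat.pow_lt_pow_right (by omega) (by omega)
      exact absurd hle (not_le.2 hlt)
  · by_cases hE2 : 2 ≤ E.ncard
    · -- D is a singleton
      obtain ⟨x0, rfl⟩ := Set.ncard_eq_one.1 (show D.ncard = 1 by omega)
      have hmdE : minDist (codeSum {x0} E) = minDist E :=
        aux_minDist_codeSum_singleton_left x0 hE2
      have bE := aux_singleton_bound hE2
      have hdE1 := aux_minDist_pos hE2
      have hdEm := aux_minDist_le_len hE2
      have hle : C.ncard ≤ Fintype.card A ^ (m - minDist E + 1) := by
        rw [hnc, hFcard, Set.ncard_singleton, one_mul]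
        exact bE
      rw [hMDS, hmd, hmdE] at hle
      have hlt : Fintype.card A ^ (m - minDist E + 1)
          < Fintype.card A ^ (n - minDist E + 1) :=
        Nat.pow_lt_pow_right (by omega) (by omega)
      exact absurd hle (not_le.2 hlt)
    · -- both singletons: fewer than two codewords
      have hD1' : D.ncard = 1 := by omega
      have hE1' : E.ncard = 1 := by omega
      rw [hD1', hE1'] at hFcard
      omega
end

section
/- Let A be an alphabet with |A| ≥ 2 and let C ⊆ A^n be a perfect code with |C| ≥ 2 that is not trivial. Then C is indecomposable. -/
section AuxProof
variable {A : Type*} [Fintype A] [DecidableEq A]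

private lemma card_filter_coe_lt {p β : ℕ} (hβ : β ≤ p) :
    (Finset.univ.filter fun i : Fin p => (i : ℕ) < β).card = β := by
  have h : ∀ m ∈ Finset.range β, m < p := fun m hm => lt_of_lt_of_le (Finset.mem_range.mp hm) hβ
  have hEq : (Finset.univ.filter fun i : Fin p => (i : ℕ) < β) = (Finset.range β).attachFin h := by
    ext i; simp [Finset.mem_attachFin]
  rw [hEq, Finset.card_attachFin, Finset.card_range]

private lemma hammingDist_append' {p q : ℕ} (a a' : Fin p → A) (b b' : Fin q → A) :
    hammingDist (Fin.append a b) (Fin.append a' b') = hammingDist a a' + hammingDist b b' := by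
  simp only [hammingDist, Finset.card_filter]
  rw [Fin.sum_univ_add]
  simp [Fin.append_left, Fin.append_right]

private lemma fin_append_inj {p q : ℕ} {a a' : Fin p → A} {b b' : Fin q → A}
    (h : Fin.append a b = Fin.append a' b') : a = a' ∧ b = b' := by
  constructor
  · funext i
    have := congrFun h (Fin.castAdd q i)
    simpa [Fin.append_left] using this
  · funext j
    have := congrFun h (Fin.natAdd p j)
    simpa [Fin.append_right] using this

private lemma exists_hammingDist_eq (hA : 2 ≤ Fintype.card A) {p β : ℕ} (hβ : β ≤ p)
    (a : Fin p → A) : ∃ u : Fin p → A, hammingDist u a = β := by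
  have hg : ∀ v : A, ∃ w : A, w ≠ v := fun v =>
    Fintype.exists_ne_of_one_lt_card (by omega) v
  choose g hg using hg
  refine ⟨fun i => if (i : ℕ) < β then g (a i) else a i, ?_⟩
  have hEq : (Finset.univ.filter fun i : Fin p =>
      (if (i : ℕ) < β then g (a i) else a i) ≠ a i)
      = Finset.univ.filter fun i : Fin p => (i : ℕ) < β := by
    ext i
    by_cases h' : (i : ℕ) < β <;> simp [h', hg]
  show (Finset.univ.filter fun i : Fin p =>
      (if (i : ℕ) < β then g (a i) else a i) ≠ a i).card = β
  rw [hEq]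
  exact card_filter_coe_lt hβ

private lemma exists_middle {n : ℕ} (c₁ c₂ : Fin n → A) (r : ℕ)
    (h : hammingDist c₁ c₂ ≤ 2 * r) :
    ∃ x : Fin n → A, hammingDist x c₁ ≤ r ∧ hammingDist x c₂ ≤ r := by
  classical
  set S := Finset.univ.filter fun i => c₁ i ≠ c₂ i with hS
  have hcard : S.card = hammingDist c₁ c₂ := rfl
  obtain ⟨T, hTS, hT⟩ := Finset.exists_subset_card_eq (s := S) (n := min r S.card) (min_le_right _ _)
  refine ⟨fun i => if i ∈ T then c₂ i else c₁ i, ?_, ?_⟩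
  · have e1 : (Finset.univ.filter fun i =>
        (if i ∈ T then c₂ i else c₁ i) ≠ c₁ i) = T := by
      ext i
      by_cases h' : i ∈ T
      · have h2 := (Finset.mem_filter.mp (hTS h')).2
        simp [h', Ne.symm h2]
      · simp [h']
    show (Finset.univ.filter fun i =>
        (if i ∈ T then c₂ i else c₁ i) ≠ c₁ i).card ≤ r
    rw [e1, hT]
    omega
  · have e2 : (Finset.univ.filter fun i =>
        (if i ∈ T then c₂ i else c₁ i) ≠ c₂ i) = S \ T := by
      ext i
      by_cases h' : i ∈ T
      · simp [h', Finset.mem_sdiff]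
      · simp [h', hS, Finset.mem_sdiff, Finset.mem_filter]
    show (Finset.univ.filter fun i =>
        (if i ∈ T then c₂ i else c₁ i) ≠ c₂ i).card ≤ r
    rw [e2, Finset.card_sdiff_of_subset hTS, hT]
    omega

private lemma codeSum_eq_univ (hA : 2 ≤ Fintype.card A) {p q : ℕ} (hp : 0 < p) (hq : 0 < q)
    {D : Set (Fin p → A)} {E : Set (Fin q → A)}
    (hperf : IsPerfectCode (codeSum D E))
    {w₁ w₂ : Fin (p + q) → A} (h₁ : w₁ ∈ codeSum D E) (h₂ : w₂ ∈ codeSum D E)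
    (hne : w₁ ≠ w₂) : codeSum D E = Set.univ := by
  classical
  set S := codeSum D E with hSdef
  set T : Set ℕ := {d | ∃ x ∈ S, ∃ y ∈ S, x ≠ y ∧ hammingDist x y = d} with hTdef
  have hTne : T.Nonempty := ⟨_, w₁, h₁, w₂, h₂, hne, rfl⟩
  set d := sInf T with hd
  obtain ⟨x₀, hx₀, y₀, hy₀, hxy₀, hdist₀⟩ := Nat.sInf_mem hTne
  have hdle : ∀ x ∈ S, ∀ y ∈ S, x ≠ y → d ≤ hammingDist x y :=
    fun x hx y hy hxy => Nat.sInf_le ⟨x, hx, y, hy, hxy, rfl⟩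
  have hd1 : 1 ≤ d := by
    have := hammingDist_pos.mpr hxy₀
    omega
  set e := (d - 1) / 2 with he
  have hcover : ∀ x : Fin (p + q) → A, ∃ c ∈ S, hammingDist x c ≤ e := by
    intro x
    obtain ⟨r, hr, c, hc, hxc⟩ := hperf x
    have h2r : 2 * r < d := by
      by_contra hcon
      push_neg at hcon
      obtain ⟨z, hz1, hz2⟩ := exists_middle x₀ y₀ r (by omega)
      exact hr x₀ hx₀ y₀ hy₀ hxy₀ z hz1 hz2
    exact ⟨c, hc, hxc.trans (by omega)⟩
  by_contra hSne
  obtain ⟨x, hx⟩ : ∃ x, x ∉ S := by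
    by_contra h; push_neg at h; exact hSne (Set.eq_univ_iff_forall.mpr h)
  obtain ⟨c, hc, hxce⟩ := hcover x
  have he1 : 1 ≤ e := by
    have hxc : x ≠ c := fun h => hx (h ▸ hc)
    have := hammingDist_pos.mpr hxc
    omega
  have hde : 2 * e + 1 ≤ d := by omega
  have hpq : d ≤ p + q := by
    have h : hammingDist x₀ y₀ ≤ p + q := by
      simpa using (hammingDist_le_card_fintype (x := x₀) (y := y₀))
    omega
  set β := min p e with hβ
  have hβp : β ≤ p := min_le_left _ _
  have hβe : β ≤ e := min_le_right _ _
  have hβ1 : 1 ≤ β := by omega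
  set γ := e + 1 - β with hγ
  have hγ1 : 1 ≤ γ := by omega
  have hγq : γ ≤ q := by omega
  obtain ⟨a, ha, b, hb, rfl⟩ := Set.mem_image2.mp hx₀
  obtain ⟨u, hu⟩ := exists_hammingDist_eq hA hβp a
  obtain ⟨v, hv⟩ := exists_hammingDist_eq hA hγq b
  obtain ⟨c', hc', hzc'⟩ := hcover (Fin.append u v)
  obtain ⟨a', ha', b', hb', rfl⟩ := Set.mem_image2.mp hc'
  rw [hammingDist_append'] at hzc'
  by_cases haa : a = a'
  · subst haa
    have hbb : b ≠ b' := by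
      rintro rfl
      rw [hu, hv] at hzc'
      omega
    have hd2 : d ≤ hammingDist b b' := by
      have hne2 : Fin.append a b ≠ Fin.append a b' := fun h => hbb (fin_append_inj h).2
      have h3 := hdle _ hx₀ _ hc' hne2
      rwa [hammingDist_append', hammingDist_self, zero_add] at h3
    have htri : hammingDist b b' ≤ hammingDist b v + hammingDist v b' :=
      hammingDist_triangle _ _ _
    have hvb : hammingDist b v = γ := by rw [hammingDist_comm]; exact hv
    rw [hu] at hzc'
    omega
  · have hd2 : d ≤ hammingDist a a' := by
      have hmem : Fin.append a' b ∈ S := Set.mem_image2_of_mem ha' hb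
      have hne2 : Fin.append a b ≠ Fin.append a' b := fun h => haa (fin_append_inj h).1
      have h3 := hdle _ hx₀ _ hmem hne2
      rwa [hammingDist_append', hammingDist_self, add_zero] at h3
    have htri : hammingDist a a' ≤ hammingDist a u + hammingDist u a' :=
      hammingDist_triangle _ _ _
    have hau : hammingDist a u = β := by rw [hammingDist_comm]; exact hu
    omega

end AuxProof

theorem perfect_nontrivial_indecomposable' {A : Type*} [Fintype A] [DecidableEq A]
    (hA : 2 ≤ Fintype.card A) {n : ℕ} (C : Set (Fin n → A)) (hcard : 2 ≤ C.ncard)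
    (hperf : IsPerfectCode C) (hnt : ¬ IsTrivialCode C) : ¬ CodeDecomposable C := by
  rintro ⟨p, q, D, E, hp, hq, hD, hE, φ, ψ, hφ, hψ, hlψ, hrψ⟩
  have hiso : ∀ x y, hammingDist (φ x) (φ y) = hammingDist x y := by
    intro x y
    refine le_antisymm (hφ.2 x y) ?_
    have h := hψ.2 (φ x) (φ y)
    rwa [hlψ x, hlψ y] at h
  obtain ⟨x, hxC, y, hyC, hxy⟩ : ∃ x ∈ C, ∃ y ∈ C, x ≠ y :=
    (Set.one_lt_ncard (Set.toFinite C)).mp (by omega)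
  have hperf' : IsPerfectCode (codeSum D E) := by
    intro x'
    obtain ⟨r, hr, c, hc, hxc⟩ := hperf (ψ x')
    refine ⟨r, ?_, φ c, hφ.1 c hc, ?_⟩
    · intro c₁ hc₁ c₂ hc₂ hne z hz1 hz2
      refine hr (ψ c₁) (hψ.1 c₁ hc₁) (ψ c₂) (hψ.1 c₂ hc₂)
        (fun h => hne (by rw [← hrψ c₁, ← hrψ c₂, h])) (ψ z)
        (le_trans (hψ.2 z c₁) hz1) (le_trans (hψ.2 z c₂) hz2)
    · calc hammingDist x' (φ c) = hammingDist (φ (ψ x')) (φ c) := by rw [hrψ x']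
        _ = hammingDist (ψ x') c := hiso _ _
        _ ≤ r := hxc
  have huniv : codeSum D E = Set.univ :=
    codeSum_eq_univ hA hp hq hperf' (hφ.1 x hxC) (hφ.1 y hyC)
      (fun h => hxy (by rw [← hlψ x, ← hlψ y, h]))
  exact hnt ⟨p + q, φ, ψ, ⟨fun _ _ => trivial, hφ.2⟩,
    ⟨fun z _ => hψ.1 z (by rw [huniv]; trivial), hψ.2⟩, hlψ, hrψ⟩

/-- Every nontrivial perfect code (over an alphabet with at least two
letters, with at least two codewords) is indecomposable. -/
theorem perfect_nontrivial_indecomposable {A : Type*} [Fintype A] [DecidableEq A]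
    (hA : 2 ≤ Fintype.card A) {n : ℕ} (C : Set (Fin n → A)) (hcard : 2 ≤ C.ncard)
    (hperf : IsPerfectCode C) (hnt : ¬ IsTrivialCode C) : ¬ CodeDecomposable C := by
  exact perfect_nontrivial_indecomposable' hA C hcard hperf hnt
end

section
/- Let C, C' ⊆ A^m and D, D' ⊆ A^l be codes, and let φ : C ⊕ D → C' ⊕ D' be an isomorphism of codes, written as φ = f ∘ σ̄ with f ∈ Conf(A^{m+l}) a configuration and σ̄ ∈ Equ(A^{m+l}) the equivalence of a permutation σ ∈ S_{m+l}. If σ({1,…,m}) = {1,…,m}, then C ≅ C' and D ≅ D'. -/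
lemma confDist {A : Type*} [DecidableEq A] {n : ℕ} (g : Fin n → Equiv.Perm A)
    (τ : Equiv.Perm (Fin n)) (x y : Fin n → A) :
    hammingDist (fun i => g i (x (τ i))) (fun i => g i (y (τ i))) = hammingDist x y := by
  simp only [hammingDist]
  apply Finset.card_equiv τ
  simp

/-- If `φ : C ⊕ D → C' ⊕ D'` is an isomorphism of codes of the form
`φ = f ∘ σ̄` with `f` a configuration and `σ̄` an equivalence, and if `σ` maps the first
block of coordinates `{1,…,m}` onto itself, then `C ≅ C'` and `D ≅ D'`. -/
theorem summands_iso_of_block_preserving {A : Type*} [Fintype A] [DecidableEq A]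
    {m l : ℕ} (C C' : Set (Fin m → A)) (D D' : Set (Fin l → A))
    (hC : C.Nonempty) (hC' : C'.Nonempty) (hD : D.Nonempty) (hD' : D'.Nonempty)
    (φ ψ : (Fin (m + l) → A) → (Fin (m + l) → A))
    (hφ : IsCodeHom (codeSum C D) (codeSum C' D') φ)
    (hψ : IsCodeHom (codeSum C' D') (codeSum C D) ψ)
    (hli : Function.LeftInverse ψ φ) (hri : Function.RightInverse ψ φ)
    (g : Fin (m + l) → Equiv.Perm A) (σ : Equiv.Perm (Fin (m + l)))
    (hform : ∀ (x : Fin (m + l) → A) (i : Fin (m + l)), φ x i = g i (x (σ i)))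
    (hσ : σ '' {i : Fin (m + l) | (i : ℕ) < m} = {i : Fin (m + l) | (i : ℕ) < m}) :
    CodeIso C C' ∧ CodeIso D D' := by
  classical
  have hmem : ∀ j : Fin (m+l), (j:ℕ) < m → ((σ j : Fin (m+l)) : ℕ) < m := by
    intro j hj
    have : σ j ∈ σ '' {i : Fin (m+l) | (i : ℕ) < m} := ⟨j, hj, rfl⟩
    rwa [hσ] at this
  have hmem' : ∀ j : Fin (m+l), ¬ (j:ℕ) < m → ¬ ((σ j : Fin (m+l)) : ℕ) < m := by
    intro j hj hcon
    have hc2 : σ j ∈ {i : Fin (m+l) | (i : ℕ) < m} := hcon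
    rw [← hσ] at hc2
    obtain ⟨k, hk, hkeq⟩ := hc2
    exact hj (σ.injective hkeq ▸ hk)
  -- the permutation on the first block
  have ht1 : ∀ i : Fin m, ((σ (Fin.castAdd l i) : Fin (m+l)) : ℕ) < m := by
    intro i; exact hmem _ (by simp)
  set t₁ : Fin m → Fin m := fun i => ⟨(σ (Fin.castAdd l i) : Fin (m+l)), ht1 i⟩ with ht₁def
  have ht1inj : Function.Injective t₁ := by
    intro a b h
    have hv : ((σ (Fin.castAdd l a) : Fin (m+l)) : ℕ) = ((σ (Fin.castAdd l b) : Fin (m+l)) : ℕ) := by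
      have h2 := congrArg Fin.val h
      simp only [ht₁def] at h2
      exact h2
    have := σ.injective (Fin.ext hv)
    exact Fin.castAdd_injective _ _ this
  set τ₁ : Equiv.Perm (Fin m) := Equiv.ofBijective t₁ (Finite.injective_iff_bijective.mp ht1inj) with hτ₁def
  have hσcast : ∀ i : Fin m, σ (Fin.castAdd l i) = Fin.castAdd l (τ₁ i) := by
    intro i; apply Fin.ext; simp [hτ₁def, ht₁def, Equiv.ofBijective_apply]
  -- the permutation on the second block
  have ht2 : ∀ i : Fin l, ((σ (Fin.natAdd m i) : Fin (m+l)) : ℕ) - m < l := by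
    intro i
    have h1 : ¬ ((σ (Fin.natAdd m i) : Fin (m+l)) : ℕ) < m := hmem' _ (by simp)
    have h2 := (σ (Fin.natAdd m i)).isLt
    omega
  set t₂ : Fin l → Fin l := fun i => ⟨(σ (Fin.natAdd m i) : Fin (m+l)) - m, ht2 i⟩ with ht₂def
  have hσnat' : ∀ i : Fin l, ((σ (Fin.natAdd m i) : Fin (m+l)) : ℕ) = m + (t₂ i : ℕ) := by
    intro i
    have h1 : ¬ ((σ (Fin.natAdd m i) : Fin (m+l)) : ℕ) < m := hmem' _ (by simp)
    simp only [ht₂def]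
    omega
  have ht2inj : Function.Injective t₂ := by
    intro a b h
    have hv : ((σ (Fin.natAdd m a) : Fin (m+l)) : ℕ) = ((σ (Fin.natAdd m b) : Fin (m+l)) : ℕ) := by
      rw [hσnat' a, hσnat' b, h]
    have h2 := σ.injective (Fin.ext hv)
    have h3 : m + (a : ℕ) = m + (b : ℕ) := by
      have := congrArg Fin.val h2
      simpa using this
    exact Fin.ext (by omega)
  set τ₂ : Equiv.Perm (Fin l) := Equiv.ofBijective t₂ (Finite.injective_iff_bijective.mp ht2inj) with hτ₂def
  have hσnat : ∀ i : Fin l, σ (Fin.natAdd m i) = Fin.natAdd m (τ₂ i) := by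
    intro i; apply Fin.ext
    simp only [hτ₂def, Equiv.ofBijective_apply, Fin.coe_natAdd]
    exact hσnat' i
  -- the component maps
  set g₁ : Fin m → Equiv.Perm A := fun i => g (Fin.castAdd l i) with hg₁def
  set g₂ : Fin l → Equiv.Perm A := fun i => g (Fin.natAdd m i) with hg₂def
  set φ₁ : (Fin m → A) → (Fin m → A) := fun x i => g₁ i (x (τ₁ i)) with hφ₁def
  set φ₂ : (Fin l → A) → (Fin l → A) := fun x i => g₂ i (x (τ₂ i)) with hφ₂def
  set ψ₁ : (Fin m → A) → (Fin m → A) := fun x i => (g₁ (τ₁.symm i))⁻¹ (x (τ₁.symm i)) with hψ₁def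
  set ψ₂ : (Fin l → A) → (Fin l → A) := fun x i => (g₂ (τ₂.symm i))⁻¹ (x (τ₂.symm i)) with hψ₂def
  have hli₁ : Function.LeftInverse ψ₁ φ₁ := by
    intro x; funext i
    simp [hψ₁def, hφ₁def]
  have hri₁ : Function.RightInverse ψ₁ φ₁ := by
    intro x; funext i
    simp [hψ₁def, hφ₁def]
  have hli₂ : Function.LeftInverse ψ₂ φ₂ := by
    intro x; funext i
    simp [hψ₂def, hφ₂def]
  have hri₂ : Function.RightInverse ψ₂ φ₂ := by
    intro x; funext i
    simp [hψ₂def, hφ₂def]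
  -- φ decomposes
  have happ : ∀ (x : Fin m → A) (y : Fin l → A),
      φ (Fin.append x y) = Fin.append (φ₁ x) (φ₂ y) := by
    intro x y; funext i
    refine Fin.addCases (fun i => ?_) (fun i => ?_) i
    · rw [hform, hσcast, Fin.append_left, Fin.append_left]
    · rw [hform, hσnat, Fin.append_right, Fin.append_right]
  -- forward membership
  have hmemC : ∀ x ∈ C, φ₁ x ∈ C' := by
    intro x hx
    obtain ⟨d, hd⟩ := hD
    have h1 : Fin.append x d ∈ codeSum C D := ⟨x, hx, d, hd, rfl⟩
    have h2 := hφ.1 _ h1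
    obtain ⟨c', hc', d', hd', heq⟩ := h2
    rw [happ] at heq
    have : c' = φ₁ x := by
      funext i
      have := congrFun heq (Fin.castAdd l i)
      simpa [Fin.append_left] using this
    rwa [← this]
  have hmemD : ∀ y ∈ D, φ₂ y ∈ D' := by
    intro y hy
    obtain ⟨c, hc⟩ := hC
    have h1 : Fin.append c y ∈ codeSum C D := ⟨c, hc, y, hy, rfl⟩
    have h2 := hφ.1 _ h1
    obtain ⟨c', hc', d', hd', heq⟩ := h2
    rw [happ] at heq
    have : d' = φ₂ y := by
      funext i
      have := congrFun heq (Fin.natAdd m i)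
      simpa [Fin.append_right] using this
    rwa [← this]
  -- backward membership
  have hmemC' : ∀ x ∈ C', ψ₁ x ∈ C := by
    intro x hx
    obtain ⟨d', hd'⟩ := hD'
    have h1 : Fin.append x d' ∈ codeSum C' D' := ⟨x, hx, d', hd', rfl⟩
    have h2 := hψ.1 _ h1
    obtain ⟨c, hc, d, hd, heq⟩ := h2
    have h3 : Fin.append x d' = Fin.append (φ₁ c) (φ₂ d) := by
      rw [← happ, heq, hri]
    have : x = φ₁ c := by
      funext i
      have := congrFun h3 (Fin.castAdd l i)
      simpa [Fin.append_left] using this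
    rw [this, hli₁ c]
    exact hc
  have hmemD' : ∀ y ∈ D', ψ₂ y ∈ D := by
    intro y hy
    obtain ⟨c', hc'⟩ := hC'
    have h1 : Fin.append c' y ∈ codeSum C' D' := ⟨c', hc', y, hy, rfl⟩
    have h2 := hψ.1 _ h1
    obtain ⟨c, hc, d, hd, heq⟩ := h2
    have h3 : Fin.append c' y = Fin.append (φ₁ c) (φ₂ d) := by
      rw [← happ, heq, hri]
    have : y = φ₂ d := by
      funext i
      have := congrFun h3 (Fin.natAdd m i)
      simpa [Fin.append_right] using this
    rw [this, hli₂ d]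
    exact hd
  -- distances
  have hdist₁ : ∀ x y : Fin m → A, hammingDist (φ₁ x) (φ₁ y) = hammingDist x y :=
    fun x y => confDist g₁ τ₁ x y
  have hdist₂ : ∀ x y : Fin l → A, hammingDist (φ₂ x) (φ₂ y) = hammingDist x y :=
    fun x y => confDist g₂ τ₂ x y
  have hdistψ₁ : ∀ x y : Fin m → A, hammingDist (ψ₁ x) (ψ₁ y) = hammingDist x y :=
    fun x y => confDist (fun i => (g₁ (τ₁.symm i))⁻¹) τ₁.symm x y
  have hdistψ₂ : ∀ x y : Fin l → A, hammingDist (ψ₂ x) (ψ₂ y) = hammingDist x y :=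
    fun x y => confDist (fun i => (g₂ (τ₂.symm i))⁻¹) τ₂.symm x y
  exact ⟨⟨φ₁, ψ₁, ⟨hmemC, fun x y => (hdist₁ x y).le⟩, ⟨hmemC', fun x y => (hdistψ₁ x y).le⟩,
      hli₁, hri₁⟩,
    ⟨φ₂, ψ₂, ⟨hmemD, fun x y => (hdist₂ x y).le⟩, ⟨hmemD', fun x y => (hdistψ₂ x y).le⟩,
      hli₂, hri₂⟩⟩
end

section
/- Every group code C ⊆ G^n is isomorphic as a group code to a direct sum D_1 ⊕ ⋯ ⊕ D_r of indecomposable group codes. Moreover, this decomposition is unique up to permutation and isomorphism: if also C ≅ D'_1 ⊕ ⋯ ⊕ D'_s with every D'_j an indecomposable group code, then r = s and there exists a permutation γ ∈ S_r such that D_i ≅ D'_{γ(i)} as group codes for every i ∈ {1,…,r}. -/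
section GroupCodes
variable {G : Type*} [Group G] [DecidableEq G]

/-- The canonical splitting homomorphism `G^{n+m} → G^n × G^m`. -/
def splitHom (G : Type*) [Group G] (n m : ℕ) :
    (Fin (n + m) → G) →* (Fin n → G) × (Fin m → G) where
  toFun z := (fun i => z (Fin.castAdd m i), fun j => z (Fin.natAdd n j))
  map_one' := rfl
  map_mul' _ _ := rfl

/-- Direct sum of two group codes, as a subgroup of `G^{n+m}`. -/
def gcSum {n m : ℕ} (C : Subgroup (Fin n → G)) (D : Subgroup (Fin m → G)) :
    Subgroup (Fin (n + m) → G) :=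
  (C.prod D).comap (splitHom G n m)

/-- `φ` is a morphism of group codes from `C` to `D`. -/
def IsGroupCodeHom {n m : ℕ} (C : Subgroup (Fin n → G)) (D : Subgroup (Fin m → G))
    (φ : (Fin n → G) → (Fin m → G)) : Prop :=
  (∀ x y : Fin n → G, φ (x * y) = φ x * φ y) ∧ (∀ x ∈ C, φ x ∈ D) ∧
    ∀ x y : Fin n → G, hammingDist (φ x) (φ y) ≤ hammingDist x y

/-- The group codes `C` and `D` are isomorphic as group codes. -/
def GroupCodeIso {n m : ℕ} (C : Subgroup (Fin n → G)) (D : Subgroup (Fin m → G)) : Prop :=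
  ∃ (φ : (Fin n → G) → (Fin m → G)) (ψ : (Fin m → G) → (Fin n → G)),
    IsGroupCodeHom C D φ ∧ IsGroupCodeHom D C ψ ∧
      Function.LeftInverse ψ φ ∧ Function.RightInverse ψ φ

/-- A group code is decomposable if it is isomorphic, as a group code, to a direct sum
of two group codes of positive lengths. -/
def GCDecomposable {n : ℕ} (C : Subgroup (Fin n → G)) : Prop :=
  ∃ (p q : ℕ) (D : Subgroup (Fin p → G)) (E : Subgroup (Fin q → G)),
    0 < p ∧ 0 < q ∧ GroupCodeIso C (gcSum D E)

/-- Reindexing homomorphism along an equality of lengths. -/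
def reindexHom (G : Type*) [Group G] {a b : ℕ} (h : a = b) :
    (Fin b → G) →* (Fin a → G) where
  toFun z := fun i => z (Fin.cast h i)
  map_one' := rfl
  map_mul' _ _ := rfl

/-- Direct sum of a finite family of group codes (of possibly different lengths). -/
def gcMultiSum : {k : ℕ} → {len : Fin k → ℕ} →
    (∀ i, Subgroup (Fin (len i) → G)) → Subgroup (Fin (∑ i, len i) → G)
  | 0, _, _ => ⊤
  | k + 1, len, D =>
    (gcSum (D 0) (gcMultiSum (fun i => D i.succ))).comap
      (reindexHom G (a := len 0 + ∑ i : Fin k, len i.succ) (b := ∑ i, len i)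
        (Fin.sum_univ_succ len).symm)

/-- Direct sum of `α` copies of the group code `D`. -/
def gcPow {m : ℕ} (D : Subgroup (Fin m → G)) (α : ℕ) :
    Subgroup (Fin (∑ _ : Fin α, m) → G) :=
  gcMultiSum (fun _ : Fin α => D)

/-- The group of group-code automorphisms of a group code `C ⊆ G^n`:  group automorphisms
of `G^n` that preserve the Hamming distance and map `C` onto `C`. -/
def AutGC {n : ℕ} (C : Subgroup (Fin n → G)) : Subgroup (MulAut (Fin n → G)) where
  carrier := {φ | (∀ x y, hammingDist (φ x) (φ y) = hammingDist x y) ∧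
    ∀ x, φ x ∈ C ↔ x ∈ C}
  one_mem' := ⟨fun _ _ => rfl, fun _ => Iff.rfl⟩
  mul_mem' := by
    rintro φ ψ ⟨hφ1, hφ2⟩ ⟨hψ1, hψ2⟩
    exact ⟨fun x y => (hφ1 (ψ x) (ψ y)).trans (hψ1 x y),
      fun x => (hφ2 (ψ x)).trans (hψ2 x)⟩
  inv_mem' := by
    rintro φ ⟨h1, h2⟩
    refine ⟨fun x y => ?_, fun x => ?_⟩
    · have := h1 (φ⁻¹ x) (φ⁻¹ y)
      rw [MulAut.apply_inv_self, MulAut.apply_inv_self] at this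
      exact this.symm
    · have := h2 (φ⁻¹ x)
      rw [MulAut.apply_inv_self] at this
      exact this.symm

/-- The action of `S_α` on `M^α` by permutation of coordinates, as a homomorphism
into the automorphism group. -/
def permActionHom (M : Type*) [Monoid M] (α : ℕ) :
    Equiv.Perm (Fin α) →* MulAut (Fin α → M) where
  toFun σ :=
    { toFun := fun f i => f (σ⁻¹ i)
      invFun := fun f i => f (σ i)
      left_inv := fun f => by funext i; simp
      right_inv := fun f => by funext i; simp
      map_mul' := fun _ _ => rfl }
  map_one' := by ext f i; simp
  map_mul' σ τ := by ext f i; simp [mul_inv_rev]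

/-- A cyclic group code: closed under the cyclic shift of coordinates. -/
def IsCyclicGC {n : ℕ} (C : Subgroup (Fin n → G)) : Prop :=
  ∀ x ∈ C, (x ∘ finRotate n) ∈ C

end GroupCodes
section Basics
variable {G : Type*} [Group G] [DecidableEq G]

lemma hammingDist_comp_bij {n N : ℕ} (ρ : Fin N → Fin n) (hρ : Function.Bijective ρ)
    (x y : Fin n → G) : hammingDist (x ∘ ρ) (y ∘ ρ) = hammingDist x y := by
  classical
  let ε := Equiv.ofBijective ρ hρ
  refine Finset.card_equiv ε (fun i => ?_)
  simp [Function.comp, ε]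

lemma groupCodeIso_comp_bij {n N : ℕ} (ρ : Fin N → Fin n) (hρ : Function.Bijective ρ)
    (C : Subgroup (Fin n → G)) (D : Subgroup (Fin N → G))
    (hmem : ∀ z, z ∈ C ↔ z ∘ ρ ∈ D) : GroupCodeIso C D := by
  classical
  let ε := Equiv.ofBijective ρ hρ
  have hcomp : ∀ z : Fin N → G, (z ∘ ε.symm) ∘ ρ = z := by
    intro z; funext k; simp [ε, Function.comp]
  have hcomp2 : ∀ z : Fin n → G, (z ∘ ρ) ∘ ε.symm = z := by
    intro z; funext k
    simp only [Function.comp]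
    exact congrArg z (Equiv.ofBijective_apply_symm_apply ρ hρ k)
  refine ⟨fun z => z ∘ ρ, fun w => w ∘ ε.symm, ⟨fun _ _ => rfl, fun z hz => (hmem z).1 hz,
    fun x y => (hammingDist_comp_bij ρ hρ x y).le⟩,
    ⟨fun _ _ => rfl, fun w hw => ?_, fun x y => ?_⟩, fun z => hcomp2 z, fun w => hcomp w⟩
  · rw [hmem]; rwa [hcomp w]
  · exact (hammingDist_comp_bij ε.symm ε.symm.bijective x y).le

lemma groupCodeIso_iff_mulEquiv {n m : ℕ} {C : Subgroup (Fin n → G)}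
    {D : Subgroup (Fin m → G)} :
    GroupCodeIso C D ↔ ∃ e : (Fin n → G) ≃* (Fin m → G),
      (∀ x y, hammingDist (e x) (e y) = hammingDist x y) ∧ ∀ x, x ∈ C ↔ e x ∈ D := by
  constructor
  · rintro ⟨φ, ψ, ⟨hm, hC, hd⟩, ⟨hm', hD, hd'⟩, hl, hr⟩
    refine ⟨⟨⟨φ, ψ, hl, hr⟩, fun x y => hm x y⟩, fun x y => le_antisymm (hd x y) ?_,
      fun x => ⟨hC x, fun h => ?_⟩⟩
    · have := hd' (φ x) (φ y); rwa [hl, hl] at this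
    · rw [← hl x]; exact hD _ h
  · rintro ⟨e, hd, hmem⟩
    refine ⟨e, e.symm, ⟨fun x y => map_mul e x y, fun x hx => (hmem x).1 hx, fun x y => (hd x y).le⟩,
      ⟨fun x y => map_mul e.symm x y, fun y hy => ?_, fun x y => ?_⟩,
      fun z => e.symm_apply_apply z, fun w => e.apply_symm_apply w⟩
    · rw [hmem]; rwa [e.apply_symm_apply]
    · have := hd (e.symm x) (e.symm y)
      rw [e.apply_symm_apply, e.apply_symm_apply] at this
      exact this.ge

lemma GroupCodeIso.symm' {n m : ℕ} {C : Subgroup (Fin n → G)} {D : Subgroup (Fin m → G)}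
    (h : GroupCodeIso C D) : GroupCodeIso D C := by
  rw [groupCodeIso_iff_mulEquiv] at h ⊢
  obtain ⟨e, hd, hmem⟩ := h
  refine ⟨e.symm, fun x y => ?_, fun x => ?_⟩
  · have := hd (e.symm x) (e.symm y)
    rw [e.apply_symm_apply, e.apply_symm_apply] at this; exact this.symm
  · have := hmem (e.symm x)
    rw [e.apply_symm_apply] at this; exact this.symm
  
lemma GroupCodeIso.trans' {n m p : ℕ} {C : Subgroup (Fin n → G)} {D : Subgroup (Fin m → G)}
    {E : Subgroup (Fin p → G)} (h1 : GroupCodeIso C D) (h2 : GroupCodeIso D E) :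
    GroupCodeIso C E := by
  rw [groupCodeIso_iff_mulEquiv] at h1 h2 ⊢
  obtain ⟨e1, hd1, hm1⟩ := h1
  obtain ⟨e2, hd2, hm2⟩ := h2
  exact ⟨e1.trans e2, fun x y => (hd2 _ _).trans (hd1 x y),
    fun x => (hm1 x).trans (hm2 (e1 x))⟩

lemma GCDecomposable.ofIso {n m : ℕ} {C : Subgroup (Fin n → G)} {D : Subgroup (Fin m → G)}
    (h : GroupCodeIso C D) (hC : GCDecomposable C) : GCDecomposable D := by
  obtain ⟨p, q, A, B, hp, hq, hiso⟩ := hC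
  exact ⟨p, q, A, B, hp, hq, (h.symm').trans' hiso⟩

end Basics
section Mono
variable {G : Type*} [Group G] [DecidableEq G]

local notation "δ" => fun i (a : G) => Function.update (1 : _ → G) i a

lemma hd_update_le {n : ℕ} (i : Fin n) (a b : G) :
    hammingDist (Function.update (1 : Fin n → G) i a) (Function.update 1 i b) ≤ 1 := by
  classical
  unfold hammingDist
  calc _ ≤ ({i} : Finset (Fin n)).card := by
        apply Finset.card_le_card
        intro k hk
        simp only [Finset.mem_filter, Finset.mem_univ, true_and] at hk
        simp only [Finset.mem_singleton]
        by_contra hne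
        rw [Function.update_of_ne hne, Function.update_of_ne hne] at hk
        exact hk rfl
    _ = 1 := Finset.card_singleton i

lemma hd_update_two {n : ℕ} {i j : Fin n} {a b : G} (hij : i ≠ j) (ha : a ≠ 1) (hb : b ≠ 1) :
    2 ≤ hammingDist (Function.update (1 : Fin n → G) i a) (Function.update 1 j b) := by
  classical
  unfold hammingDist
  calc (2 : ℕ) = ({i, j} : Finset (Fin n)).card := by rw [Finset.card_pair hij]
    _ ≤ _ := by
      apply Finset.card_le_card
      intro k hk
      simp only [Finset.mem_insert, Finset.mem_singleton] at hk
      simp only [Finset.mem_filter, Finset.mem_univ, true_and]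
      rcases hk with rfl | rfl
      · rw [Function.update_self, Function.update_of_ne hij]
        simpa using ha
      · rw [Function.update_self, Function.update_of_ne (Ne.symm hij)]
        simpa using fun h => hb h.symm

lemma hd_update_one {n : ℕ} (i : Fin n) {a : G} (ha : a ≠ 1) :
    hammingDist (Function.update (1 : Fin n → G) i a) 1 = 1 := by
  classical
  unfold hammingDist
  have : (Finset.univ.filter fun k => Function.update (1 : Fin n → G) i a k ≠ (1 : Fin n → G) k)
      = {i} := by
    ext k
    simp only [Finset.mem_filter, Finset.mem_univ, true_and, Finset.mem_singleton]
    by_cases hk : k = i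
    · subst hk; simp [Function.update_self, ha]
    · simp [Function.update_of_ne hk, hk]
  rw [this, Finset.card_singleton]

lemma wt_one {m : ℕ} {z : Fin m → G} (h : hammingDist z 1 = 1) :
    ∃ j c, c ≠ 1 ∧ z = Function.update (1 : Fin m → G) j c := by
  classical
  unfold hammingDist at h
  obtain ⟨j, hj⟩ := Finset.card_eq_one.1 h
  refine ⟨j, z j, ?_, ?_⟩
  · have : j ∈ Finset.univ.filter fun k => z k ≠ (1 : Fin m → G) k := by
      rw [hj]; exact Finset.mem_singleton_self j
    simpa using this
  · funext k
    by_cases hk : k = j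
    · subst hk; simp [Function.update_self]
    · rw [Function.update_of_ne hk]
      have : k ∉ Finset.univ.filter fun k => z k ≠ (1 : Fin m → G) k := by
        rw [hj]; simpa using hk
      simpa using this

lemma update_eq_update {n : ℕ} {i j : Fin n} {a b : G} (ha : a ≠ 1)
    (h : Function.update (1 : Fin n → G) i a = Function.update (1 : Fin n → G) j b) : i = j := by
  by_contra hij
  have := congrFun h i
  rw [Function.update_self, Function.update_of_ne hij] at this
  exact ha (by simpa using this)

lemma hd_e_one {n m : ℕ} (e : (Fin n → G) ≃* (Fin m → G))
    (hd : ∀ x y, hammingDist (e x) (e y) = hammingDist x y) (x : Fin n → G) :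
    hammingDist (e x) 1 = hammingDist x 1 := by
  have := hd x 1; rwa [map_one] at this

lemma monomial_pt {n m : ℕ} [Nontrivial G] (e : (Fin n → G) ≃* (Fin m → G))
    (hd : ∀ x y, hammingDist (e x) (e y) = hammingDist x y) :
    ∃ σ : Fin n → Fin m, ∀ i (a : G), a ≠ 1 →
      ∃ c, c ≠ 1 ∧ e (Function.update 1 i a) = Function.update (1 : Fin m → G) (σ i) c := by
  classical
  obtain ⟨g0, hg0⟩ := exists_ne (1 : G)
  have wt : ∀ (i : Fin n) (a : G), a ≠ 1 → ∃ j c, c ≠ 1 ∧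
      e (Function.update 1 i a) = Function.update (1 : Fin m → G) j c := by
    intro i a ha
    refine wt_one ?_
    rw [hd_e_one e hd, hd_update_one i ha]
  choose j0 c0 hc0 he0 using fun i => wt i g0 hg0
  refine ⟨j0, fun i a ha => ?_⟩
  obtain ⟨j, c, hc, he⟩ := wt i a ha
  rcases eq_or_ne j (j0 i) with rfl | hne
  · exact ⟨c, hc, he⟩
  · exfalso
    have h2 : 2 ≤ hammingDist (e (Function.update 1 i a)) (e (Function.update 1 i g0)) := by
      rw [he, he0]
      exact hd_update_two hne hc (hc0 i)
    rw [hd] at h2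
    exact absurd (le_trans h2 (hd_update_le i a g0)) (by norm_num)

/-- The support-transport lemma. -/
lemma monomial_supp {n m : ℕ} [Nontrivial G] (e : (Fin n → G) ≃* (Fin m → G))
    (hd : ∀ x y, hammingDist (e x) (e y) = hammingDist x y)
    (σ : Fin n → Fin m) (τ : Fin m → Fin n)
    (hσ : ∀ i (a : G), a ≠ 1 →
      ∃ c, c ≠ 1 ∧ e (Function.update 1 i a) = Function.update (1 : Fin m → G) (σ i) c)
    (hτ : ∀ j (a : G), a ≠ 1 →
      ∃ c, c ≠ 1 ∧ e.symm (Function.update 1 j a) = Function.update (1 : Fin n → G) (τ j) c)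
    (hinv : ∀ i, τ (σ i) = i)
    (z : Fin n → G) (i : Fin n) (hz : z i = 1) : e z (σ i) = 1 := by
  classical
  by_contra hc
  set c := e z (σ i) with hcdef
  -- e.symm of the corresponding weight-one vector sits at coordinate i
  obtain ⟨b, hb, hbe⟩ := hτ (σ i) c hc
  rw [hinv i] at hbe
  have hup : Function.update (1 : Fin m → G) (σ i) c = e (Function.update 1 i b) := by
    rw [← hbe, e.apply_symm_apply]
  -- first distance computation
  have h1 : hammingDist (e z) (Function.update 1 (σ i) c) + 1 = hammingDist (e z) 1 := by
    unfold hammingDist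
    have hmem : σ i ∈ Finset.univ.filter fun k => e z k ≠ (1 : Fin m → G) k := by
      simpa using hc
    have hset : (Finset.univ.filter fun k => e z k ≠ Function.update (1 : Fin m → G) (σ i) c k)
        = (Finset.univ.filter fun k => e z k ≠ (1 : Fin m → G) k).erase (σ i) := by
      ext k
      simp only [Finset.mem_filter, Finset.mem_univ, true_and, Finset.mem_erase]
      by_cases hk : k = σ i
      · subst hk; simp [Function.update_self, hcdef]
      · rw [Function.update_of_ne hk]; simp [hk]
    rw [hset, Finset.card_erase_add_one hmem]
  -- second distance computation
  have h2 : hammingDist z (Function.update 1 i b) = hammingDist z 1 + 1 := by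
    unfold hammingDist
    have hnmem : i ∉ Finset.univ.filter fun k => z k ≠ (1 : Fin n → G) k := by simp [hz]
    have hset : (Finset.univ.filter fun k => z k ≠ Function.update (1 : Fin n → G) i b k)
        = insert i (Finset.univ.filter fun k => z k ≠ (1 : Fin n → G) k) := by
      ext k
      simp only [Finset.mem_filter, Finset.mem_univ, true_and, Finset.mem_insert]
      by_cases hk : k = i
      · subst hk; simp [Function.update_self, hz, Ne.symm hb]
      · rw [Function.update_of_ne hk]; simp [hk]
    rw [hset, Finset.card_insert_of_notMem hnmem, add_comm]
  have h3 : hammingDist (e z) (Function.update 1 (σ i) c) = hammingDist z (Function.update 1 i b) := by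
    rw [hup, hd]
  have h4 := hd_e_one e hd z
  omega

theorem monomial {n m : ℕ} [Nontrivial G] (e : (Fin n → G) ≃* (Fin m → G))
    (hd : ∀ x y, hammingDist (e x) (e y) = hammingDist x y) :
    ∃ (σ : Fin n ≃ Fin m) (g : Fin n → G →* G),
      (∀ i, Function.Bijective (g i)) ∧ ∀ (z : Fin n → G) i, e z (σ i) = g i (z i) := by
  classical
  have hd' : ∀ x y, hammingDist (e.symm x) (e.symm y) = hammingDist x y := by
    intro x y
    have := hd (e.symm x) (e.symm y)
    rw [e.apply_symm_apply, e.apply_symm_apply] at this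
    exact this.symm
  obtain ⟨σ0, hσ0⟩ := monomial_pt e hd
  obtain ⟨τ0, hτ0⟩ := monomial_pt e.symm hd'
  obtain ⟨g0, hg0⟩ := exists_ne (1 : G)
  have hinv1 : ∀ i, τ0 (σ0 i) = i := by
    intro i
    obtain ⟨c, hc, he⟩ := hσ0 i g0 hg0
    obtain ⟨b, hb, hbe⟩ := hτ0 (σ0 i) c hc
    rw [← he, e.symm_apply_apply] at hbe
    exact (update_eq_update hg0 hbe).symm
  have hinv2 : ∀ j, σ0 (τ0 j) = j := by
    intro j
    obtain ⟨c, hc, he⟩ := hτ0 j g0 hg0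
    obtain ⟨b, hb, hbe⟩ := hσ0 (τ0 j) c hc
    rw [← he, e.apply_symm_apply] at hbe
    exact (update_eq_update hg0 hbe).symm
  have hsupp : ∀ (z : Fin n → G) i, z i = 1 → e z (σ0 i) = 1 :=
    monomial_supp e hd σ0 τ0 hσ0 hτ0 hinv1
  have hsupp' : ∀ (w : Fin m → G) j, w j = 1 → e.symm w (τ0 j) = 1 := by
    refine monomial_supp e.symm hd' τ0 σ0 hτ0 ?_ hinv2
    intro i a ha
    obtain ⟨c, hc, hce⟩ := hσ0 i a ha
    exact ⟨c, hc, by rw [MulEquiv.symm_symm]; exact hce⟩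
  -- update of one splits multiplicatively
  have hupd_mul : ∀ (i : Fin n) (a b : G),
      Function.update (1 : Fin n → G) i (a * b)
        = Function.update (1 : Fin n → G) i a * Function.update (1 : Fin n → G) i b := by
    intro i a b
    funext k
    by_cases hk : k = i
    · subst hk; simp [Function.update_self]
    · simp [Function.update_of_ne hk]
  have hupd_one : ∀ i : Fin n, Function.update (1 : Fin n → G) i (1 : G) = 1 := by
    intro i; funext k
    by_cases hk : k = i
    · subst hk; simp
    · simp [Function.update_of_ne hk]
  set g : Fin n → G →* G := fun i =>
    { toFun := fun a => e (Function.update 1 i a) (σ0 i)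
      map_one' := by
        show e (Function.update (1 : Fin n → G) i (1 : G)) (σ0 i) = 1
        rw [hupd_one i, map_one]; rfl
      map_mul' := by
        intro a b
        show e (Function.update (1 : Fin n → G) i (a * b)) (σ0 i) = _
        rw [hupd_mul, map_mul]
        rfl } with hg
  have hkey : ∀ (z : Fin n → G) i, e z (σ0 i) = g i (z i) := by
    intro z i
    have h1 : (z * (Function.update (1 : Fin n → G) i (z i))⁻¹) i = 1 := by
      simp [Function.update_self]
    have h2 := hsupp _ i h1
    rw [map_mul, map_inv] at h2
    have : e z (σ0 i) * (e (Function.update 1 i (z i)) (σ0 i))⁻¹ = 1 := h2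
    have := mul_eq_one_iff_eq_inv.1 this
    rw [this, inv_inv]
    rfl
  have hbij : ∀ i, Function.Bijective (g i) := by
    intro i
    constructor
    · rw [injective_iff_map_eq_one]
      intro a ha
      have hall : e (Function.update (1 : Fin n → G) i a) = 1 := by
        funext j
        show e (Function.update (1 : Fin n → G) i a) j = 1
        rcases eq_or_ne (τ0 j) i with heq | hne
        · have hj : j = σ0 i := by rw [← heq, hinv2]
          rw [hj]
          exact ha
        · have h1 : Function.update (1 : Fin n → G) i a (τ0 j) = 1 :=
            by rw [Function.update_of_ne hne]; rfl
          have := hsupp _ (τ0 j) h1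
          rwa [hinv2 j] at this
      have hu : Function.update (1 : Fin n → G) i a = 1 :=
        e.injective (by rw [hall, map_one])
      have := congrFun hu i
      rwa [Function.update_self] at this
    · intro b
      refine ⟨e.symm (Function.update 1 (σ0 i) b) i, ?_⟩
      rw [← hkey, e.apply_symm_apply, Function.update_self]
  exact ⟨⟨σ0, τ0, hinv1, hinv2⟩, g, hbij, hkey⟩

end Mono
section Split
variable {G : Type*} [Group G] [DecidableEq G]

/-- Mix of two vectors along a coordinate set. -/
def gmix {n : ℕ} (S : Finset (Fin n)) (x y : Fin n → G) : Fin n → G :=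
  fun i => if i ∈ S then x i else y i

/-- `C` splits along the coordinate set `S`. -/
def GSplits {n : ℕ} (C : Subgroup (Fin n → G)) (S : Finset (Fin n)) : Prop :=
  ∀ x ∈ C, ∀ y ∈ C, gmix S x y ∈ C

lemma GSplits.univ' {n : ℕ} (C : Subgroup (Fin n → G)) : GSplits C Finset.univ := by
  intro x hx y hy
  have : gmix Finset.univ x y = x := by funext k; simp [gmix]
  rwa [this]

lemma GSplits.inter' {n : ℕ} {C : Subgroup (Fin n → G)} {S T : Finset (Fin n)}
    (hS : GSplits C S) (hT : GSplits C T) : GSplits C (S ∩ T) := by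
  intro x hx y hy
  have h1 := hS (gmix T x y) (hT x hx y hy) y hy
  have : gmix S (gmix T x y) y = gmix (S ∩ T) x y := by
    funext k
    simp only [gmix, Finset.mem_inter]
    by_cases h1 : k ∈ S <;> by_cases h2 : k ∈ T <;> simp [h1, h2]
  rwa [this] at h1

lemma GSplits.compl' {n : ℕ} {C : Subgroup (Fin n → G)} {S : Finset (Fin n)}
    (hS : GSplits C S) : GSplits C Sᶜ := by
  intro x hx y hy
  have := hS y hy x hx
  have heq : gmix S y x = gmix Sᶜ x y := by
    funext k
    simp only [gmix, Finset.mem_compl]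
    by_cases h : k ∈ S <;> simp [h]
  rwa [heq] at this

lemma GSplits.sdiff' {n : ℕ} {C : Subgroup (Fin n → G)} {S T : Finset (Fin n)}
    (hS : GSplits C S) (hT : GSplits C T) : GSplits C (S \ T) := by
  have := hS.inter' hT.compl'
  rwa [show S \ T = S ∩ Tᶜ by ext k; simp [Finset.mem_sdiff, Finset.mem_inter, Finset.mem_compl]] 

/-- Projection homomorphism along a coordinate map. -/
def projHom (G : Type*) [Group G] {p n : ℕ} (f : Fin p → Fin n) :
    (Fin n → G) →* (Fin p → G) where
  toFun z := z ∘ f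
  map_one' := rfl
  map_mul' _ _ := rfl

/-- Restriction (projection) of a code to a subset of coordinates, via an enumeration. -/
def restrictCode {n p : ℕ} (C : Subgroup (Fin n → G)) (f : Fin p → Fin n) :
    Subgroup (Fin p → G) := C.map (projHom G f)

lemma mem_restrictCode {n p : ℕ} {C : Subgroup (Fin n → G)} {f : Fin p → Fin n}
    {a : Fin p → G} : a ∈ restrictCode C f ↔ ∃ z ∈ C, z ∘ f = a := by
  unfold restrictCode projHom
  exact Subgroup.mem_map

/-- A splitting set of `C` induces a splitting set of a restriction of `C`. -/
lemma GSplits.restrict {n p : ℕ} {C : Subgroup (Fin n → G)} {T : Finset (Fin n)}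
    (hT : GSplits C T) (f : Fin p → Fin n) :
    GSplits (restrictCode C f) (Finset.univ.filter fun j => f j ∈ T) := by
  intro a ha b hb
  obtain ⟨x, hx, rfl⟩ := mem_restrictCode.1 ha
  obtain ⟨y, hy, rfl⟩ := mem_restrictCode.1 hb
  refine mem_restrictCode.2 ⟨gmix T x y, hT x hx y hy, ?_⟩
  funext j
  simp only [Function.comp, gmix, Finset.mem_filter, Finset.mem_univ, true_and]

/-- A splitting set of a restriction of `C` along a splitting set lifts to `C`. -/
lemma GSplits.of_restrict {n p : ℕ} {C : Subgroup (Fin n → G)} {S : Finset (Fin n)}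
    {f : Fin p → Fin n} (hS : GSplits C S) (hinj : Function.Injective f)
    (hran : ∀ j, f j ∈ S) (hsurj : ∀ k ∈ S, ∃ j, f j = k)
    {T : Finset (Fin p)} (hT : GSplits (restrictCode C f) T) :
    GSplits C (T.image f) := by
  intro x hx y hy
  have ha : (x ∘ f) ∈ restrictCode C f := mem_restrictCode.2 ⟨x, hx, rfl⟩
  have hb : (y ∘ f) ∈ restrictCode C f := mem_restrictCode.2 ⟨y, hy, rfl⟩
  obtain ⟨w, hw, hwf⟩ := mem_restrictCode.1 (hT _ ha _ hb)
  have hM := hS w hw y hy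
  have heq : gmix S w y = gmix (T.image f) x y := by
    funext k
    simp only [gmix]
    by_cases hk : k ∈ S
    · obtain ⟨j, rfl⟩ := hsurj k hk
      have h1 : w (f j) = gmix T (x ∘ f) (y ∘ f) j := congrFun hwf j
      rw [if_pos hk, h1]
      simp only [gmix, Function.comp]
      have himg : f j ∈ T.image f ↔ j ∈ T := by
        constructor
        · intro h
          obtain ⟨j', hj', hjj⟩ := Finset.mem_image.1 h
          rwa [← hinj hjj]
        · intro h; exact Finset.mem_image_of_mem f h
      by_cases hj : j ∈ T
      · rw [if_pos hj, if_pos (himg.2 hj)]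
      · rw [if_neg hj, if_neg (fun hmem => hj (himg.1 hmem))]
    · have : k ∉ T.image f := by
        intro hmem
        obtain ⟨j, _, rfl⟩ := Finset.mem_image.1 hmem
        exact hk (hran j)
      rw [if_neg hk, if_neg this]
  rwa [heq] at hM

/-- Enumeration of a finite set of coordinates. -/
lemma finset_enum {n : ℕ} (S : Finset (Fin n)) : ∃ f : Fin S.card → Fin n,
    Function.Injective f ∧ ∀ k, k ∈ S ↔ ∃ j, f j = k := by
  classical
  refine ⟨fun j => (S.equivFin.symm j : Fin n), fun j j' h => ?_, fun k => ?_⟩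
  · exact S.equivFin.symm.injective (Subtype.ext h)
  · constructor
    · intro hk
      exact ⟨S.equivFin ⟨k, hk⟩, by simp⟩
    · rintro ⟨j, rfl⟩
      exact (S.equivFin.symm j).2

/-- Restrictions along two enumerations with the same image are isomorphic group codes. -/
lemma restrict_iso_of_image_eq {n p q : ℕ} (C : Subgroup (Fin n → G))
    {f : Fin p → Fin n} {f' : Fin q → Fin n} (hf : Function.Injective f)
    (hf' : Function.Injective f')
    (him : Finset.image f Finset.univ = Finset.image f' Finset.univ) :
    GroupCodeIso (restrictCode C f) (restrictCode C f') := by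
  classical
  have hch : ∀ j : Fin q, ∃ i : Fin p, f i = f' j := by
    intro j
    have : f' j ∈ Finset.image f Finset.univ := by
      rw [him]; exact Finset.mem_image_of_mem f' (Finset.mem_univ j)
    obtain ⟨i, _, hi⟩ := Finset.mem_image.1 this
    exact ⟨i, hi⟩
  choose ρ hρ using hch
  have hρinj : Function.Injective ρ := by
    intro j j' h
    apply hf'
    rw [← hρ j, ← hρ j', h]
  have hcard : Fintype.card (Fin q) = Fintype.card (Fin p) := by
    have h1 : (Finset.image f Finset.univ).card = p := by
      rw [Finset.card_image_of_injective _ hf, Finset.card_univ, Fintype.card_fin]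
    have h2 : (Finset.image f' Finset.univ).card = q := by
      rw [Finset.card_image_of_injective _ hf', Finset.card_univ, Fintype.card_fin]
    simp only [Fintype.card_fin]
    rw [← h1, ← h2, him]
  have hρbij : Function.Bijective ρ := (Fintype.bijective_iff_injective_and_card ρ).2 ⟨hρinj, hcard⟩
  apply groupCodeIso_comp_bij ρ hρbij
  intro a
  constructor
  · intro ha
    obtain ⟨z, hz, rfl⟩ := mem_restrictCode.1 ha
    refine mem_restrictCode.2 ⟨z, hz, ?_⟩
    funext j
    show z (f' j) = z (f (ρ j))
    rw [hρ j]
  · intro ha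
    obtain ⟨z, hz, hzf⟩ := mem_restrictCode.1 ha
    refine mem_restrictCode.2 ⟨z, hz, ?_⟩
    funext i
    obtain ⟨j, rfl⟩ := hρbij.2 i
    show z (f (ρ j)) = a (ρ j)
    rw [hρ j]
    exact congrFun hzf j

end Split
section Atoms
variable {G : Type*} [Group G] [DecidableEq G]

open Classical in
/-- The minimal splitting set containing a given coordinate. -/
noncomputable def atomAt {n : ℕ} (C : Subgroup (Fin n → G)) (k : Fin n) : Finset (Fin n) :=
  ((Finset.univ.powerset).filter (fun S => GSplits C S ∧ k ∈ S)).inf id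

lemma gsplits_inf {n : ℕ} (C : Subgroup (Fin n → G)) (s : Finset (Finset (Fin n)))
    (h : ∀ S ∈ s, GSplits C S) : GSplits C (s.inf id) := by
  classical
  induction s using Finset.induction_on with
  | empty =>
    rw [Finset.inf_empty]
    exact GSplits.univ' C
  | insert a s hnotmem ih =>
    rw [Finset.inf_insert]
    exact (h a (Finset.mem_insert_self a s)).inter'
      (ih fun S hS => h S (Finset.mem_insert_of_mem hS))

lemma atomAt_splits {n : ℕ} (C : Subgroup (Fin n → G)) (k : Fin n) :
    GSplits C (atomAt C k) := by
  classical
  apply gsplits_inf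
  intro S hS
  exact (Finset.mem_filter.1 hS).2.1

lemma mem_atomAt {n : ℕ} (C : Subgroup (Fin n → G)) (k : Fin n) : k ∈ atomAt C k := by
  classical
  have h : ({k} : Finset (Fin n)) ≤ atomAt C k := by
    apply Finset.le_inf
    intro S hS
    show ({k} : Finset (Fin n)) ⊆ S
    rw [Finset.singleton_subset_iff]
    exact (Finset.mem_filter.1 hS).2.2
  exact h (Finset.mem_singleton_self k)

lemma atomAt_min {n : ℕ} {C : Subgroup (Fin n → G)} {k : Fin n} {S : Finset (Fin n)}
    (hS : GSplits C S) (hk : k ∈ S) : atomAt C k ⊆ S := by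
  classical
  have hmem : S ∈ (Finset.univ.powerset).filter
      (fun T => GSplits C T ∧ k ∈ T) := by
    rw [Finset.mem_filter]
    exact ⟨Finset.mem_powerset.2 (Finset.subset_univ S), hS, hk⟩
  have h : atomAt C k ≤ id S := Finset.inf_le hmem
  exact h

lemma atomAt_eq {n : ℕ} {C : Subgroup (Fin n → G)} {j k : Fin n}
    (h : j ∈ atomAt C k) : atomAt C j = atomAt C k := by
  apply Finset.Subset.antisymm
  · exact atomAt_min (atomAt_splits C k) h
  · by_cases hk : k ∈ atomAt C j
    · exact atomAt_min (atomAt_splits C j) hk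
    · exfalso
      have hsd : GSplits C (atomAt C k \ atomAt C j) :=
        (atomAt_splits C k).sdiff' (atomAt_splits C j)
      have hkmem : k ∈ atomAt C k \ atomAt C j := by
        rw [Finset.mem_sdiff]
        exact ⟨mem_atomAt C k, hk⟩
      have := atomAt_min hsd hkmem
      have hj := this h
      rw [Finset.mem_sdiff] at hj
      exact hj.2 (mem_atomAt C j)

lemma atomAt_atom {n : ℕ} {C : Subgroup (Fin n → G)} {k : Fin n} {T : Finset (Fin n)}
    (hsub : T ⊆ atomAt C k) (hT : GSplits C T) (hne : T.Nonempty) : T = atomAt C k := by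
  obtain ⟨j, hj⟩ := hne
  have h1 : atomAt C j ⊆ T := atomAt_min hT hj
  have h2 : atomAt C j = atomAt C k := atomAt_eq (hsub hj)
  rw [h2] at h1
  exact Finset.Subset.antisymm hsub h1

end Atoms
section MultiSum
variable {G : Type*} [Group G] [DecidableEq G]

lemma mem_gcSum {p q : ℕ} {D : Subgroup (Fin p → G)} {E : Subgroup (Fin q → G)}
    {w : Fin (p + q) → G} : w ∈ gcSum D E ↔
      ((fun i => w (Fin.castAdd q i)) ∈ D ∧ (fun j => w (Fin.natAdd p j)) ∈ E) :=
  Iff.rfl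

lemma gcMultiSum_char {G : Type*} [Group G] [DecidableEq G] :
    ∀ (r : ℕ) (len : Fin r → ℕ) (D : ∀ i, Subgroup (Fin (len i) → G)),
    ∃ E : (Σ i, Fin (len i)) ≃ Fin (∑ i, len i),
      ∀ z, z ∈ gcMultiSum D ↔ ∀ i, (fun j => z (E ⟨i, j⟩)) ∈ D i := by
  intro r
  induction r with
  | zero =>
    intro len D
    have h0 : (∑ i, len i) = 0 := by simp
    haveI : IsEmpty (Fin (∑ i, len i)) := by rw [h0]; infer_instance
    refine ⟨Equiv.equivOfIsEmpty _ _, fun z => ?_⟩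
    constructor
    · intro _ i; exact i.elim0
    · intro _; exact Subgroup.mem_top z
  | succ r ih =>
    intro len D
    obtain ⟨E', hE'⟩ := ih (fun i => len i.succ) (fun i => D i.succ)
    set h : len 0 + ∑ i : Fin r, len i.succ = ∑ i, len i := (Fin.sum_univ_succ len).symm
    set F : (Σ i : Fin (r + 1), Fin (len i)) → Fin (∑ i, len i) := fun p =>
      Fin.cast h (Fin.cases (motive := fun i => Fin (len i) → Fin (len 0 + ∑ i : Fin r, len i.succ))
        (fun j => Fin.castAdd _ j)
        (fun i' j => Fin.natAdd (len 0) (E' ⟨i', j⟩)) p.1 p.2) with hF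
    have hF0 : ∀ j : Fin (len 0), F ⟨0, j⟩ = Fin.cast h (Fin.castAdd _ j) := by
      intro j; simp [hF]
    have hFs : ∀ (i : Fin r) (j : Fin (len i.succ)),
        F ⟨i.succ, j⟩ = Fin.cast h (Fin.natAdd (len 0) (E' ⟨i, j⟩)) := by
      intro i j; simp [hF]
    have hinj : Function.Injective F := by
      rintro ⟨i, j⟩ ⟨i', j'⟩ hFe
      induction i using Fin.cases with
      | zero =>
        induction i' using Fin.cases with
        | zero =>
          rw [hF0, hF0] at hFe
          have : (j : ℕ) = (j' : ℕ) := by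
            have := congrArg Fin.val hFe
            simpa using this
          simp [Fin.ext_iff, this]
        | succ i' =>
          rw [hF0, hFs] at hFe
          have := congrArg Fin.val hFe
          simp [Fin.coe_castAdd, Fin.coe_natAdd] at this
          omega
      | succ i =>
        induction i' using Fin.cases with
        | zero =>
          rw [hFs, hF0] at hFe
          have := congrArg Fin.val hFe
          simp [Fin.coe_castAdd, Fin.coe_natAdd] at this
          omega
        | succ i' =>
          rw [hFs, hFs] at hFe
          have hval := congrArg Fin.val hFe
          simp [Fin.coe_natAdd] at hval
          have : E' ⟨i, j⟩ = E' ⟨i', j'⟩ := Fin.ext hval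
          have hsig := E'.injective this
          cases hsig
          rfl
    have hbij : Function.Bijective F := by
      refine (Fintype.bijective_iff_injective_and_card F).2 ⟨hinj, ?_⟩
      simp [Fintype.card_sigma]
    set E : (Σ i : Fin (r + 1), Fin (len i)) ≃ Fin (∑ i, len i) := Equiv.ofBijective F hbij
      with hEdef
    have hEapp : ∀ p, E p = F p := fun p => rfl
    refine ⟨E, fun z => ?_⟩
    have hmem1 : z ∈ gcMultiSum D ↔
        ((fun i => z (Fin.cast h (Fin.castAdd _ i))) ∈ D 0 ∧
         (fun j => z (Fin.cast h (Fin.natAdd (len 0) j))) ∈ gcMultiSum (fun i => D i.succ)) :=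
      Iff.rfl
    rw [hmem1, hE' (fun j => z (Fin.cast h (Fin.natAdd (len 0) j)))]
    constructor
    · rintro ⟨h0, hs⟩ i
      induction i using Fin.cases with
      | zero =>
        have : (fun j => z (E ⟨0, j⟩)) = fun i => z (Fin.cast h (Fin.castAdd _ i)) := by
          funext j; rw [hEapp, hF0]
        rw [this]; exact h0
      | succ i =>
        have : (fun j => z (E ⟨i.succ, j⟩))
            = fun j => z (Fin.cast h (Fin.natAdd (len 0) (E' ⟨i, j⟩))) := by
          funext j; rw [hEapp, hFs]
        rw [this]; exact hs i
    · intro hall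
      constructor
      · have := hall 0
        have heq : (fun j => z (E ⟨0, j⟩)) = fun i => z (Fin.cast h (Fin.castAdd _ i)) := by
          funext j; rw [hEapp, hF0]
        rwa [heq] at this
      · intro i
        have := hall i.succ
        have heq : (fun j => z (E ⟨i.succ, j⟩))
            = fun j => z (Fin.cast h (Fin.natAdd (len 0) (E' ⟨i, j⟩))) := by
          funext j; rw [hEapp, hFs]
        rwa [heq] at this

end MultiSum
section Synth
variable {G : Type*} [Group G] [DecidableEq G]

lemma recombine {n r : ℕ} {len : Fin r → ℕ} (C : Subgroup (Fin n → G))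
    (f : ∀ i, Fin (len i) → Fin n)
    (hbij : Function.Bijective (fun p : Σ i, Fin (len i) => f p.1 p.2))
    (hsplit : ∀ i, GSplits C (Finset.image (f i) Finset.univ))
    (z : Fin n → G) (hx : ∀ i, ∃ x ∈ C, ∀ j, x (f i j) = z (f i j)) : z ∈ C := by
  classical
  have hdisj : ∀ {i i' : Fin r} {j j'}, f i j = f i' j' → i = i' := by
    intro i i' j j' hfe
    have := hbij.1 (a₁ := ⟨i, j⟩) (a₂ := ⟨i', j'⟩) hfe
    exact congrArg Sigma.fst this
  have key : ∀ t : ℕ, ∃ w ∈ C, ∀ i : Fin r, (i : ℕ) < t → ∀ j, w (f i j) = z (f i j) := by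
    intro t
    induction t with
    | zero => exact ⟨1, one_mem C, fun i hi => absurd hi (by omega)⟩
    | succ t ih =>
      obtain ⟨w, hw, hagree⟩ := ih
      by_cases ht : t < r
      · set it : Fin r := ⟨t, ht⟩
        obtain ⟨x, hxC, hxf⟩ := hx it
        refine ⟨gmix (Finset.image (f it) Finset.univ) x w, hsplit it x hxC w hw, ?_⟩
        intro i hi j
        by_cases hii : i = it
        · subst hii
          have hmem : f it j ∈ Finset.image (f it) Finset.univ :=
            Finset.mem_image_of_mem _ (Finset.mem_univ j)
          show (if f it j ∈ Finset.image (f it) Finset.univ then x (f it j) else w (f it j))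
            = z (f it j)
          rw [if_pos hmem]
          exact hxf j
        · have hlt : (i : ℕ) < t := by
            have : (i : ℕ) ≠ t := fun hc => hii (Fin.ext hc)
            omega
          have hnmem : f i j ∉ Finset.image (f it) Finset.univ := by
            intro hc
            obtain ⟨j', _, hj'⟩ := Finset.mem_image.1 hc
            exact hii (hdisj hj'.symm)
          show (if f i j ∈ Finset.image (f it) Finset.univ then x (f i j) else w (f i j))
            = z (f i j)
          rw [if_neg hnmem]
          exact hagree i hlt j
      · exact ⟨w, hw, fun i hi j => hagree i (by have := i.isLt; omega) j⟩
  obtain ⟨w, hw, hagree⟩ := key r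
  have : w = z := by
    funext k
    obtain ⟨⟨i, j⟩, rfl⟩ := hbij.2 k
    exact hagree i i.isLt j
  rwa [← this]

lemma synthesis {n r : ℕ} {len : Fin r → ℕ} (C : Subgroup (Fin n → G))
    (f : ∀ i, Fin (len i) → Fin n)
    (hbij : Function.Bijective (fun p : Σ i, Fin (len i) => f p.1 p.2))
    (hsplit : ∀ i, GSplits C (Finset.image (f i) Finset.univ)) :
    GroupCodeIso C (gcMultiSum (fun i => restrictCode C (f i))) := by
  classical
  obtain ⟨E, hE⟩ := gcMultiSum_char r len (fun i => restrictCode C (f i))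
  set ρ : Fin (∑ i, len i) → Fin n := fun k => f (E.symm k).1 (E.symm k).2 with hρdef
  have hρbij : Function.Bijective ρ := by
    have : ρ = (fun p : Σ i, Fin (len i) => f p.1 p.2) ∘ E.symm := by
      funext k; rfl
    rw [this]
    exact hbij.comp E.symm.bijective
  have hρE : ∀ i j, ρ (E ⟨i, j⟩) = f i j := by
    intro i j
    show f (E.symm (E ⟨i, j⟩)).1 (E.symm (E ⟨i, j⟩)).2 = f i j
    rw [Equiv.symm_apply_apply]
  apply groupCodeIso_comp_bij ρ hρbij
  intro z
  rw [hE (z ∘ ρ)]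
  constructor
  · intro hz i
    have heq : (fun j => (z ∘ ρ) (E ⟨i, j⟩)) = z ∘ f i := by
      funext j
      simp only [Function.comp_apply]
      rw [hρE]
    rw [heq]
    exact mem_restrictCode.2 ⟨z, hz, rfl⟩
  · intro hall
    apply recombine C f hbij hsplit
    intro i
    obtain ⟨x, hxC, hxf⟩ := mem_restrictCode.1 (hall i)
    refine ⟨x, hxC, fun j => ?_⟩
    have := congrFun hxf j
    simp only [Function.comp_apply] at this
    rw [this]
    show z (ρ (E ⟨i, j⟩)) = z (f i j)
    rw [hρE]

end Synth
section Analyze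
variable {G : Type*} [Group G] [DecidableEq G]

lemma multisum_restrict {r : ℕ} {len : Fin r → ℕ} (D : ∀ i, Subgroup (Fin (len i) → G))
    (E : (Σ i, Fin (len i)) ≃ Fin (∑ i, len i))
    (hE : ∀ z, z ∈ gcMultiSum D ↔ ∀ i, (fun j => z (E ⟨i, j⟩)) ∈ D i) (i : Fin r) :
    restrictCode (gcMultiSum D) (fun j => E ⟨i, j⟩) = D i := by
  classical
  ext a
  rw [mem_restrictCode]
  constructor
  · rintro ⟨z, hz, rfl⟩
    exact (hE z).1 hz i
  · intro ha
    set u : Fin (len i) → Fin (∑ i, len i) := fun j => E ⟨i, j⟩ with hu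
    set z : Fin (∑ i, len i) → G :=
      fun k => if h : ∃ j, u j = k then a (Classical.choose h) else 1 with hzdef
    have huinj : Function.Injective u := by
      intro j j' h
      simpa using E.injective h
    have hzu : z ∘ u = a := by
      funext j
      have hex : ∃ j', u j' = u j := ⟨j, rfl⟩
      show (if h : ∃ j', u j' = u j then a (Classical.choose h) else 1) = a j
      rw [dif_pos hex]
      have hspec := Classical.choose_spec hex
      rw [huinj hspec]
    refine ⟨z, ?_, hzu⟩
    rw [hE]
    intro i'
    by_cases hii : i' = i
    · subst hii
      have heq : (fun j => z (E ⟨i', j⟩)) = a := hzu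
      rw [heq]; exact ha
    · have heq : (fun j => z (E ⟨i', j⟩)) = (1 : Fin (len i') → G) := by
        funext j
        show (if h : ∃ j', u j' = E ⟨i', j⟩ then a (Classical.choose h) else 1) = 1
        rw [dif_neg]
        rintro ⟨j', hj'⟩
        exact hii (congrArg Sigma.fst (E.injective hj')).symm
      rw [heq]; exact one_mem _

lemma restrict_transport {n N : ℕ} (C : Subgroup (Fin n → G)) (C' : Subgroup (Fin N → G))
    (e : (Fin n → G) ≃* (Fin N → G)) (σ : Fin n ≃ Fin N) (g : Fin n → G →* G)
    (hgbij : ∀ i, Function.Bijective (g i)) (hkey : ∀ z i, e z (σ i) = g i (z i))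
    (hmem : ∀ z, z ∈ C ↔ e z ∈ C') {p : ℕ} (f : Fin p → Fin n) :
    GroupCodeIso (restrictCode C f) (restrictCode C' (fun j => σ (f j))) := by
  classical
  set ge : Fin n → (G ≃* G) := fun i => MulEquiv.ofBijective (g i) (hgbij i) with hge
  have hgecoe : ∀ i (a : G), ge i a = g i a := fun i a => rfl
  have hkey' : ∀ (w : Fin N → G) (j : Fin n), e.symm w j = (ge j).symm (w (σ j)) := by
    intro w j
    have := hkey (e.symm w) j
    rw [e.apply_symm_apply] at this
    rw [this, ← hgecoe, MulEquiv.symm_apply_apply]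
  refine ⟨fun a => fun j => g (f j) (a j), fun b => fun j => (ge (f j)).symm (b j),
    ⟨fun a b => ?_, fun a ha => ?_, fun a b => ?_⟩,
    ⟨fun a b => ?_, fun b hb => ?_, fun a b => ?_⟩, fun a => ?_, fun b => ?_⟩
  · funext j; exact map_mul (g (f j)) (a j) (b j)
  · obtain ⟨z, hz, rfl⟩ := mem_restrictCode.1 ha
    refine mem_restrictCode.2 ⟨e z, (hmem z).1 hz, ?_⟩
    funext j
    show e z (σ (f j)) = g (f j) ((z ∘ f) j)
    rw [hkey]
    rfl
  · exact hammingDist_comp_le_hammingDist (fun j => g (f j))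
  · funext j; exact map_mul (ge (f j)).symm (a j) (b j)
  · obtain ⟨w, hw, rfl⟩ := mem_restrictCode.1 hb
    refine mem_restrictCode.2 ⟨e.symm w, ?_, ?_⟩
    · rw [hmem, e.apply_symm_apply]; exact hw
    · funext j
      show e.symm w (f j) = (ge (f j)).symm ((w ∘ fun j => σ (f j)) j)
      rw [hkey']
      rfl
  · exact hammingDist_comp_le_hammingDist (fun j => ⇑(ge (f j)).symm)
  · funext j
    show (ge (f j)).symm (g (f j) (a j)) = a j
    rw [← hgecoe, MulEquiv.symm_apply_apply]
  · funext j
    show g (f j) ((ge (f j)).symm (b j)) = b j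
    rw [← hgecoe, MulEquiv.apply_symm_apply]

lemma analyze {n r : ℕ} [Nontrivial G] {len : Fin r → ℕ} (C : Subgroup (Fin n → G))
    (D : ∀ i, Subgroup (Fin (len i) → G)) (hiso : GroupCodeIso C (gcMultiSum D)) :
    ∃ f : ∀ i, Fin (len i) → Fin n,
      Function.Bijective (fun p : Σ i, Fin (len i) => f p.1 p.2) ∧
      (∀ i, GSplits C (Finset.image (f i) Finset.univ)) ∧
      (∀ i, GroupCodeIso (D i) (restrictCode C (f i))) := by
  classical
  obtain ⟨e, hd, hmem⟩ := groupCodeIso_iff_mulEquiv.1 hiso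
  obtain ⟨σ, g, hgbij, hkey⟩ := monomial e hd
  obtain ⟨E, hE⟩ := gcMultiSum_char r len D
  set f : ∀ i, Fin (len i) → Fin n := fun i j => σ.symm (E ⟨i, j⟩) with hf
  have hfbij : Function.Bijective (fun p : Σ i, Fin (len i) => f p.1 p.2) := by
    have heq : (fun p : Σ i, Fin (len i) => f p.1 p.2) = fun p => (E.trans σ.symm) p := by
      funext p; rcases p with ⟨i, j⟩; rfl
    rw [heq]; exact (E.trans σ.symm).bijective
  have hσf : ∀ i j, σ (f i j) = E ⟨i, j⟩ := by
    intro i j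
    show σ (σ.symm (E ⟨i, j⟩)) = E ⟨i, j⟩
    rw [Equiv.apply_symm_apply]
  refine ⟨f, hfbij, ?_, ?_⟩
  · intro i x hx y hy
    rw [hmem, hE]
    intro i'
    by_cases hii : i' = i
    · subst hii
      have heq : (fun j => e (gmix (Finset.image (f i') Finset.univ) x y) (E ⟨i', j⟩))
          = fun j => e x (E ⟨i', j⟩) := by
        funext j
        rw [← hσf, hkey, hkey]
        congr 1
        have hmem2 : f i' j ∈ Finset.image (f i') Finset.univ :=
          Finset.mem_image_of_mem _ (Finset.mem_univ j)
        show (if f i' j ∈ Finset.image (f i') Finset.univ then x (f i' j) else y (f i' j))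
          = x (f i' j)
        rw [if_pos hmem2]
      rw [heq]
      exact (hE (e x)).1 ((hmem x).1 hx) i'
    · have heq : (fun j => e (gmix (Finset.image (f i) Finset.univ) x y) (E ⟨i', j⟩))
          = fun j => e y (E ⟨i', j⟩) := by
        funext j
        rw [← hσf, hkey, hkey]
        congr 1
        have hnmem : f i' j ∉ Finset.image (f i) Finset.univ := by
          intro hc
          obtain ⟨j', _, hj'⟩ := Finset.mem_image.1 hc
          have := hfbij.1 (a₁ := ⟨i, j'⟩) (a₂ := ⟨i', j⟩) hj'
          exact hii (congrArg Sigma.fst this).symm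
        show (if f i' j ∈ Finset.image (f i) Finset.univ then x (f i' j) else y (f i' j))
          = y (f i' j)
        rw [if_neg hnmem]
      rw [heq]
      exact (hE (e y)).1 ((hmem y).1 hy) i'
  · intro i
    have hiso2 := restrict_transport C (gcMultiSum D) e σ g hgbij hkey hmem (f i)
    have hue : (fun j => σ (f i j)) = fun j => E ⟨i, j⟩ := funext (hσf i)
    rw [hue, multisum_restrict D E hE i] at hiso2
    exact hiso2.symm'

end Analyze
section Decomp
variable {G : Type*} [Group G] [DecidableEq G]

lemma exists_split_of_decomposable {n : ℕ} [Nontrivial G] {C : Subgroup (Fin n → G)}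
    (h : GCDecomposable C) :
    ∃ S : Finset (Fin n), GSplits C S ∧ S.Nonempty ∧ S ≠ Finset.univ := by
  classical
  obtain ⟨p, q, D, E, hp, hq, hiso⟩ := h
  obtain ⟨e, hd, hmem⟩ := groupCodeIso_iff_mulEquiv.1 hiso
  obtain ⟨σ, g, hgbij, hkey⟩ := monomial e hd
  set S : Finset (Fin n) := Finset.univ.filter (fun k => ((σ k : Fin (p + q)) : ℕ) < p)
    with hSdef
  have hmemS : ∀ k, k ∈ S ↔ ((σ k : Fin (p + q)) : ℕ) < p := by
    intro k; simp [hSdef]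
  refine ⟨S, ?_, ?_, ?_⟩
  · intro x hx y hy
    rw [hmem]
    have hx' := mem_gcSum.1 ((hmem x).1 hx)
    have hy' := mem_gcSum.1 ((hmem y).1 hy)
    refine mem_gcSum.2 ⟨?_, ?_⟩
    · have heq : (fun i => e (gmix S x y) (Fin.castAdd q i))
          = fun i => e x (Fin.castAdd q i) := by
        funext i
        have hk : Fin.castAdd q i = σ (σ.symm (Fin.castAdd q i)) := by
          rw [Equiv.apply_symm_apply]
        rw [hk, hkey, hkey]
        congr 1
        have hmemk : σ.symm (Fin.castAdd q i) ∈ S := by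
          rw [hmemS, Equiv.apply_symm_apply]
          simpa using i.isLt
        show (if σ.symm (Fin.castAdd q i) ∈ S then x _ else y _) = x _
        rw [if_pos hmemk]
      rw [heq]; exact hx'.1
    · have heq : (fun j => e (gmix S x y) (Fin.natAdd p j))
          = fun j => e y (Fin.natAdd p j) := by
        funext j
        have hk : Fin.natAdd p j = σ (σ.symm (Fin.natAdd p j)) := by
          rw [Equiv.apply_symm_apply]
        rw [hk, hkey, hkey]
        congr 1
        have hnmemk : σ.symm (Fin.natAdd p j) ∉ S := by
          rw [hmemS, Equiv.apply_symm_apply]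
          simp [Fin.coe_natAdd]
        show (if σ.symm (Fin.natAdd p j) ∈ S then x _ else y _) = y _
        rw [if_neg hnmemk]
      rw [heq]; exact hy'.2
  · refine ⟨σ.symm (Fin.castAdd q ⟨0, hp⟩), ?_⟩
    rw [hmemS, Equiv.apply_symm_apply]
    simpa using hp
  · intro hc
    have : σ.symm (Fin.natAdd p ⟨0, hq⟩) ∈ S := by
      rw [hc]; exact Finset.mem_univ _
    rw [hmemS, Equiv.apply_symm_apply] at this
    simp [Fin.coe_natAdd] at this

lemma decomposable_of_split {n : ℕ} {C : Subgroup (Fin n → G)} {S : Finset (Fin n)}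
    (hsp : GSplits C S) (hne : S.Nonempty) (hnu : S ≠ Finset.univ) : GCDecomposable C := by
  classical
  obtain ⟨fS, hfSinj, hfSmem⟩ := finset_enum S
  obtain ⟨fT, hfTinj, hfTmem⟩ := finset_enum Sᶜ
  set ρ : Fin (S.card + Sᶜ.card) → Fin n :=
    fun k => Sum.elim fS fT (finSumFinEquiv.symm k) with hρdef
  have hfS_S : ∀ j, fS j ∈ S := fun j => (hfSmem (fS j)).2 ⟨j, rfl⟩
  have hfT_T : ∀ j, fT j ∈ Sᶜ := fun j => (hfTmem (fT j)).2 ⟨j, rfl⟩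
  have hρbij : Function.Bijective ρ := by
    constructor
    · intro k k' hkk
      have hkk' : Sum.elim fS fT (finSumFinEquiv.symm k)
          = Sum.elim fS fT (finSumFinEquiv.symm k') := hkk
      apply finSumFinEquiv.symm.injective
      rcases hs : finSumFinEquiv.symm k with a | a <;>
        rcases hs' : finSumFinEquiv.symm k' with b | b <;>
          rw [hs, hs'] at hkk' <;> simp only [Sum.elim_inl, Sum.elim_inr] at hkk'
      · rw [hfSinj hkk']
      · exfalso
        have h1 := hfS_S a
        have h2 := hfT_T b
        rw [hkk'] at h1
        rw [Finset.mem_compl] at h2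
        exact h2 h1
      · exfalso
        have h1 := hfS_S b
        have h2 := hfT_T a
        rw [← hkk'] at h1
        rw [Finset.mem_compl] at h2
        exact h2 h1
      · rw [hfTinj hkk']
    · intro k
      by_cases hk : k ∈ S
      · obtain ⟨j, hj⟩ := (hfSmem k).1 hk
        refine ⟨finSumFinEquiv (Sum.inl j), ?_⟩
        show Sum.elim fS fT (finSumFinEquiv.symm (finSumFinEquiv (Sum.inl j))) = k
        rw [Equiv.symm_apply_apply]
        simpa using hj
      · obtain ⟨j, hj⟩ := (hfTmem k).1 (Finset.mem_compl.2 hk)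
        refine ⟨finSumFinEquiv (Sum.inr j), ?_⟩
        show Sum.elim fS fT (finSumFinEquiv.symm (finSumFinEquiv (Sum.inr j))) = k
        rw [Equiv.symm_apply_apply]
        simpa using hj
  have hρl : ∀ i, ρ (Fin.castAdd Sᶜ.card i) = fS i := by
    intro i
    show Sum.elim fS fT (finSumFinEquiv.symm (Fin.castAdd Sᶜ.card i)) = fS i
    rw [finSumFinEquiv_symm_apply_castAdd]
    rfl
  have hρr : ∀ j, ρ (Fin.natAdd S.card j) = fT j := by
    intro j
    show Sum.elim fS fT (finSumFinEquiv.symm (Fin.natAdd S.card j)) = fT j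
    rw [finSumFinEquiv_symm_apply_natAdd]
    rfl
  have hiso : GroupCodeIso C (gcSum (restrictCode C fS) (restrictCode C fT)) := by
    apply groupCodeIso_comp_bij ρ hρbij
    intro z
    constructor
    · intro hz
      refine mem_gcSum.2 ⟨?_, ?_⟩
      · refine mem_restrictCode.2 ⟨z, hz, ?_⟩
        funext i
        show z (fS i) = z (ρ (Fin.castAdd Sᶜ.card i))
        rw [hρl]
      · refine mem_restrictCode.2 ⟨z, hz, ?_⟩
        funext j
        show z (fT j) = z (ρ (Fin.natAdd S.card j))
        rw [hρr]
    · intro hz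
      obtain ⟨h1, h2⟩ := mem_gcSum.1 hz
      obtain ⟨x, hx, hxf⟩ := mem_restrictCode.1 h1
      obtain ⟨y, hy, hyf⟩ := mem_restrictCode.1 h2
      have : z = gmix S x y := by
        funext k
        show z k = if k ∈ S then x k else y k
        by_cases hk : k ∈ S
        · obtain ⟨j, rfl⟩ := (hfSmem k).1 hk
          rw [if_pos hk]
          have h3 : x (fS j) = z (ρ (Fin.castAdd Sᶜ.card j)) := congrFun hxf j
          rw [hρl] at h3
          exact h3.symm
        · obtain ⟨j, rfl⟩ := (hfTmem k).1 (Finset.mem_compl.2 hk)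
          rw [if_neg hk]
          have h3 : y (fT j) = z (ρ (Fin.natAdd S.card j)) := congrFun hyf j
          rw [hρr] at h3
          exact h3.symm
      rw [this]
      exact hsp x hx y hy
  refine ⟨S.card, Sᶜ.card, restrictCode C fS, restrictCode C fT,
    Finset.card_pos.2 hne, Finset.card_pos.2 ?_, hiso⟩
  rw [Finset.nonempty_iff_ne_empty]
  intro hc
  apply hnu
  rwa [Finset.compl_eq_empty_iff] at hc

end Decomp
section Final
variable {G : Type*} [Group G] [DecidableEq G]

lemma gc_existence {n : ℕ} [Nontrivial G] (C : Subgroup (Fin n → G)) :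
    ∃ (r : ℕ) (len : Fin r → ℕ) (D : ∀ i, Subgroup (Fin (len i) → G)),
      (∀ i, 0 < len i) ∧ (∀ i, ¬ GCDecomposable (D i)) ∧ GroupCodeIso C (gcMultiSum D) := by
  classical
  set B : Finset (Finset (Fin n)) := Finset.univ.image (atomAt C) with hB
  set r := B.card with hr
  set P : Fin r → Finset (Fin n) := fun i => (B.equivFin.symm i : Finset (Fin n)) with hP
  have hPatom : ∀ i, ∃ k, P i = atomAt C k := by
    intro i
    have hmem : (P i) ∈ B := (B.equivFin.symm i).2
    rw [hB] at hmem
    obtain ⟨k, _, hk⟩ := Finset.mem_image.1 hmem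
    exact ⟨k, hk.symm⟩
  have hPmem_eq : ∀ i k, k ∈ P i → atomAt C k = P i := by
    intro i k hk
    obtain ⟨k', hk'⟩ := hPatom i
    rw [hk'] at hk ⊢
    exact atomAt_eq hk
  have hPinj : ∀ i i', P i = P i' → i = i' := by
    intro i i' h
    exact B.equivFin.symm.injective (Subtype.ext h)
  have hPne : ∀ i, (P i).Nonempty := by
    intro i
    obtain ⟨k, hk⟩ := hPatom i
    exact ⟨k, hk ▸ mem_atomAt C k⟩
  have hPsplit : ∀ i, GSplits C (P i) := by
    intro i
    obtain ⟨k, hk⟩ := hPatom i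
    rw [hk]; exact atomAt_splits C k
  have hPidx : ∀ k : Fin n, ∃ i, k ∈ P i := by
    intro k
    have hmemB : atomAt C k ∈ B := Finset.mem_image_of_mem _ (Finset.mem_univ k)
    refine ⟨B.equivFin ⟨atomAt C k, hmemB⟩, ?_⟩
    show k ∈ (B.equivFin.symm (B.equivFin ⟨_, hmemB⟩) : Finset (Fin n))
    rw [Equiv.symm_apply_apply]
    exact mem_atomAt C k
  choose f hfinj hfiff using fun i => finset_enum (P i)
  have himg : ∀ i, Finset.image (f i) Finset.univ = P i := by
    intro i; ext k
    simp only [Finset.mem_image]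
    constructor
    · rintro ⟨j, _, rfl⟩; exact (hfiff i (f i j)).2 ⟨j, rfl⟩
    · intro hk; obtain ⟨j, hj⟩ := (hfiff i k).1 hk; exact ⟨j, Finset.mem_univ j, hj⟩
  have hbij : Function.Bijective (fun p : Σ i, Fin ((P i).card) => f p.1 p.2) := by
    constructor
    · rintro ⟨i, j⟩ ⟨i', j'⟩ h
      simp only at h
      have hii : i = i' := by
        have h1 : f i j ∈ P i := (hfiff i _).2 ⟨j, rfl⟩
        have h2 : f i j ∈ P i' := by rw [h]; exact (hfiff i' _).2 ⟨j', rfl⟩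
        apply hPinj
        rw [← hPmem_eq i _ h1, ← hPmem_eq i' _ h2]
      subst hii
      rw [hfinj i h]
    · intro k
      obtain ⟨i, hk⟩ := hPidx k
      obtain ⟨j, hj⟩ := (hfiff i k).1 hk
      exact ⟨⟨i, j⟩, hj⟩
  have hiso := synthesis C f hbij (fun i => by rw [himg]; exact hPsplit i)
  refine ⟨r, fun i => (P i).card, fun i => restrictCode C (f i),
    fun i => Finset.card_pos.2 (hPne i), fun i hdec => ?_, hiso⟩
  obtain ⟨T, hTsp, hTne, hTnu⟩ := exists_split_of_decomposable hdec
  have hlift : GSplits C (T.image (f i)) :=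
    GSplits.of_restrict (hPsplit i) (hfinj i) (fun j => (hfiff i _).2 ⟨j, rfl⟩)
      (fun k hk => (hfiff i k).1 hk) hTsp
  have hsub : T.image (f i) ⊆ P i := by
    intro k hk
    obtain ⟨j, _, rfl⟩ := Finset.mem_image.1 hk
    exact (hfiff i _).2 ⟨j, rfl⟩
  have hatomP : ∀ T' : Finset (Fin n), T' ⊆ P i → GSplits C T' → T'.Nonempty → T' = P i := by
    intro T' hT's hT'sp hT'ne
    obtain ⟨k0, hk0⟩ := hPatom i
    rw [hk0] at hT's ⊢
    exact atomAt_atom hT's hT'sp hT'ne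
  have hTim : T.image (f i) = P i := hatomP _ hsub hlift (hTne.image (f i))
  apply hTnu
  rw [Finset.eq_univ_iff_forall]
  intro j
  have : f i j ∈ T.image (f i) := by
    rw [hTim]
    exact (hfiff i _).2 ⟨j, rfl⟩
  obtain ⟨j', hj', hjj⟩ := Finset.mem_image.1 this
  rwa [← hfinj i hjj]

lemma gc_uniqueness {n : ℕ} [Nontrivial G] (C : Subgroup (Fin n → G))
    (r s : ℕ) (len : Fin r → ℕ) (len' : Fin s → ℕ)
    (D : ∀ i, Subgroup (Fin (len i) → G)) (D' : ∀ j, Subgroup (Fin (len' j) → G))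
    (hpos : ∀ i, 0 < len i) (hpos' : ∀ j, 0 < len' j)
    (hind : ∀ i, ¬ GCDecomposable (D i)) (hind' : ∀ j, ¬ GCDecomposable (D' j))
    (h1 : GroupCodeIso C (gcMultiSum D)) (h2 : GroupCodeIso C (gcMultiSum D')) :
    ∃ γ : Fin r ≃ Fin s, ∀ i, GroupCodeIso (D i) (D' (γ i)) := by
  classical
  obtain ⟨f, hfbij, hfsplit, hfiso⟩ := analyze C D h1
  obtain ⟨f', hfbij', hfsplit', hfiso'⟩ := analyze C D' h2
  set P : Fin r → Finset (Fin n) := fun i => Finset.image (f i) Finset.univ with hPdef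
  set Q : Fin s → Finset (Fin n) := fun j => Finset.image (f' j) Finset.univ with hQdef
  have hfinj : ∀ i, Function.Injective (f i) := by
    intro i j j' h
    have := hfbij.1 (a₁ := ⟨i, j⟩) (a₂ := ⟨i, j'⟩) h
    simpa using this
  have hfinj' : ∀ j, Function.Injective (f' j) := by
    intro i j j' h
    have := hfbij'.1 (a₁ := ⟨i, j⟩) (a₂ := ⟨i, j'⟩) h
    simpa using this
  have hPne : ∀ i, (P i).Nonempty :=
    fun i => ⟨f i ⟨0, hpos i⟩, Finset.mem_image_of_mem _ (Finset.mem_univ _)⟩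
  have hQne : ∀ j, (Q j).Nonempty :=
    fun j => ⟨f' j ⟨0, hpos' j⟩, Finset.mem_image_of_mem _ (Finset.mem_univ _)⟩
  have hatomic : ∀ (p : ℕ) (F : Fin p → Fin n) (A : Subgroup (Fin p → G)),
      Function.Injective F → GSplits C (Finset.image F Finset.univ) →
      ¬ GCDecomposable A → GroupCodeIso A (restrictCode C F) →
      ∀ T : Finset (Fin n), T ⊆ Finset.image F Finset.univ → GSplits C T → T.Nonempty →
      T = Finset.image F Finset.univ := by
    intro p F A hFinj hFsplit hA hAiso T hsub hTsp hTne
    set T0 : Finset (Fin p) := Finset.univ.filter (fun j => F j ∈ T) with hT0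
    have hT0sp : GSplits (restrictCode C F) T0 := hTsp.restrict F
    have hT0ne : T0.Nonempty := by
      obtain ⟨k, hk⟩ := hTne
      obtain ⟨j, _, rfl⟩ := Finset.mem_image.1 (hsub hk)
      exact ⟨j, by simp [hT0, hk]⟩
    by_cases hT0u : T0 = Finset.univ
    · apply Finset.Subset.antisymm hsub
      intro k hk
      obtain ⟨j, _, rfl⟩ := Finset.mem_image.1 hk
      have : j ∈ T0 := by rw [hT0u]; exact Finset.mem_univ j
      rw [hT0] at this
      simpa using this
    · exfalso
      exact hA (GCDecomposable.ofIso hAiso.symm' (decomposable_of_split hT0sp hT0ne hT0u))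
  have hPatomic : ∀ i (T : Finset (Fin n)), T ⊆ P i → GSplits C T → T.Nonempty → T = P i :=
    fun i => hatomic (len i) (f i) (D i) (hfinj i) (hfsplit i) (hind i) (hfiso i)
  have hQatomic : ∀ j (T : Finset (Fin n)), T ⊆ Q j → GSplits C T → T.Nonempty → T = Q j :=
    fun j => hatomic (len' j) (f' j) (D' j) (hfinj' j) (hfsplit' j) (hind' j) (hfiso' j)
  have hQcover : ∀ k : Fin n, ∃ j, k ∈ Q j := by
    intro k
    obtain ⟨⟨j, t⟩, rfl⟩ := hfbij'.2 k
    exact ⟨j, Finset.mem_image_of_mem _ (Finset.mem_univ t)⟩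
  have hPcover : ∀ k : Fin n, ∃ i, k ∈ P i := by
    intro k
    obtain ⟨⟨i, t⟩, rfl⟩ := hfbij.2 k
    exact ⟨i, Finset.mem_image_of_mem _ (Finset.mem_univ t)⟩
  have hmatch : ∀ i, ∃ j, P i = Q j := by
    intro i
    obtain ⟨k, hk⟩ := hPne i
    obtain ⟨j, hkQ⟩ := hQcover k
    have hint : GSplits C (P i ∩ Q j) := (hfsplit i).inter' (hfsplit' j)
    have hne2 : (P i ∩ Q j).Nonempty := ⟨k, Finset.mem_inter.2 ⟨hk, hkQ⟩⟩
    have e1 : P i ∩ Q j = P i := hPatomic i _ Finset.inter_subset_left hint hne2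
    have e2 : P i ∩ Q j = Q j := hQatomic j _ Finset.inter_subset_right hint hne2
    exact ⟨j, e1.symm.trans e2⟩
  have hmatch' : ∀ j, ∃ i, Q j = P i := by
    intro j
    obtain ⟨k, hk⟩ := hQne j
    obtain ⟨i, hkP⟩ := hPcover k
    have hint : GSplits C (P i ∩ Q j) := (hfsplit i).inter' (hfsplit' j)
    have hne2 : (P i ∩ Q j).Nonempty := ⟨k, Finset.mem_inter.2 ⟨hkP, hk⟩⟩
    have e1 : P i ∩ Q j = P i := hPatomic i _ Finset.inter_subset_left hint hne2
    have e2 : P i ∩ Q j = Q j := hQatomic j _ Finset.inter_subset_right hint hne2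
    exact ⟨i, e2.symm.trans e1⟩
  choose u hu using hmatch
  choose v hv using hmatch'
  have hPinj : ∀ i i', P i = P i' → i = i' := by
    intro i i' h
    obtain ⟨k, hk⟩ := hPne i
    have hk' : k ∈ P i' := h ▸ hk
    obtain ⟨t, _, ht⟩ := Finset.mem_image.1 hk
    obtain ⟨t', _, ht'⟩ := Finset.mem_image.1 hk'
    have heq : f i t = f i' t' := by rw [ht, ht']
    exact congrArg Sigma.fst (hfbij.1 (a₁ := ⟨i, t⟩) (a₂ := ⟨i', t'⟩) heq)
  have hQinj : ∀ j j', Q j = Q j' → j = j' := by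
    intro j j' h
    obtain ⟨k, hk⟩ := hQne j
    have hk' : k ∈ Q j' := h ▸ hk
    obtain ⟨t, _, ht⟩ := Finset.mem_image.1 hk
    obtain ⟨t', _, ht'⟩ := Finset.mem_image.1 hk'
    have heq : f' j t = f' j' t' := by rw [ht, ht']
    exact congrArg Sigma.fst (hfbij'.1 (a₁ := ⟨j, t⟩) (a₂ := ⟨j', t'⟩) heq)
  have hvu : ∀ i, v (u i) = i := by
    intro i
    apply hPinj
    rw [← hv (u i), ← hu i]
  have huv : ∀ j, u (v j) = j := by
    intro j
    apply hQinj
    rw [← hu (v j), ← hv j]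
  refine ⟨⟨u, v, hvu, huv⟩, fun i => ?_⟩
  have hmid : GroupCodeIso (restrictCode C (f i)) (restrictCode C (f' (u i))) :=
    restrict_iso_of_image_eq C (hfinj i) (hfinj' (u i)) (hu i)
  exact ((hfiso i).trans' hmid).trans' (hfiso' (u i)).symm'

lemma subsingleton_iso [Subsingleton G] {n m : ℕ} (C : Subgroup (Fin n → G))
    (D : Subgroup (Fin m → G)) : GroupCodeIso C D := by
  refine ⟨fun _ => 1, fun _ => 1, ⟨fun _ _ => (mul_one (1 : Fin m → G)).symm,
    fun _ _ => one_mem D, fun x y => ?_⟩, ⟨fun _ _ => (mul_one (1 : Fin n → G)).symm,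
    fun _ _ => one_mem C, fun x y => ?_⟩, fun x => Subsingleton.elim _ _,
    fun x => Subsingleton.elim _ _⟩
  · rw [hammingDist_self]; exact Nat.zero_le _
  · rw [hammingDist_self]; exact Nat.zero_le _

lemma subsingleton_decomposable [Subsingleton G] {n : ℕ} (C : Subgroup (Fin n → G)) :
    GCDecomposable C :=
  ⟨1, 1, ⊤, ⊤, one_pos, one_pos, subsingleton_iso C _⟩

end Final
/-- Every group code is isomorphic, as a group code, to a direct sum of
indecomposable group codes, and this decomposition is unique up to a permutation of the
summands and isomorphism of the corresponding summands. -/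
theorem groupCode_unique_decomposition {G : Type*} [Group G] [Fintype G] [DecidableEq G]
    {n : ℕ} (hn : 0 < n) (C : Subgroup (Fin n → G)) :
    (∃ (r : ℕ) (len : Fin r → ℕ) (D : ∀ i, Subgroup (Fin (len i) → G)),
      (∀ i, 0 < len i) ∧ (∀ i, ¬ GCDecomposable (D i)) ∧
        GroupCodeIso C (gcMultiSum D)) ∧
    (∀ (r s : ℕ) (len : Fin r → ℕ) (len' : Fin s → ℕ)
      (D : ∀ i, Subgroup (Fin (len i) → G)) (D' : ∀ j, Subgroup (Fin (len' j) → G)),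
      (∀ i, 0 < len i) → (∀ j, 0 < len' j) →
      (∀ i, ¬ GCDecomposable (D i)) → (∀ j, ¬ GCDecomposable (D' j)) →
      GroupCodeIso C (gcMultiSum D) → GroupCodeIso C (gcMultiSum D') →
      ∃ γ : Fin r ≃ Fin s, ∀ i, GroupCodeIso (D i) (D' (γ i))) := by
  rcases subsingleton_or_nontrivial G with hsub | hnt
  · constructor
    · exact ⟨0, Fin.elim0, fun i => i.elim0, fun i => i.elim0, fun i => i.elim0,
        subsingleton_iso C _⟩
    · intro r s len len' D D' hpos hpos' hind hind' hiso1 hiso2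
      have hr0 : r = 0 := by
        by_contra h
        exact hind ⟨0, Nat.pos_of_ne_zero h⟩ (subsingleton_decomposable _)
      have hs0 : s = 0 := by
        by_contra h
        exact hind' ⟨0, Nat.pos_of_ne_zero h⟩ (subsingleton_decomposable _)
      refine ⟨finCongr (by rw [hr0, hs0]), fun i => ?_⟩
      exact absurd i.isLt (by omega)
  · constructor
    · exact gc_existence C
    · intro r s len len' D D' hpos hpos' hind hind' hiso1 hiso2
      exact gc_uniqueness C r s len len' D D' hpos hpos' hind hind' hiso1 hiso2
end
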